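/- arXiv:2503.02171 — 11 statements merged into one kernel-verified Lean document; each statement's English description precedes it below -/
import Mathlib

section
/- Suppose P₁, P₂, T are real n×n matrices such that the columns of the 2n×n matrix [P₁; P₂] span an invariant subspace of the Hamiltonian matrix H, i.e. H·[P₁; P₂] = [P₁; P₂]·T (equivalently, A·P₁ − BR⁻¹Bᵀ·P₂ = P₁·T and −Q·P₁ − Aᵀ·P₂ = P₂·T), and suppose P₁ is invertible. Then P := P₂·P₁⁻¹ satisfies the continuous-time algebraic Riccati equation AᵀP + PA − PBR⁻¹BᵀP + Q = 0. -/
open Matrix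

/-- If the columns of `[P₁; P₂]` span an invariant subspace of the
Hamiltonian matrix `H = [[A, −BR⁻¹Bᵀ], [−Q, −Aᵀ]]` (i.e. `H·[P₁;P₂] = [P₁;P₂]·T`) and `P₁`
is invertible, then `P := P₂·P₁⁻¹` solves the continuous-time algebraic Riccati equation. -/
theorem invariant_subspace_solves_care {n m : ℕ}
    (A Q : Matrix (Fin n) (Fin n) ℝ) (B : Matrix (Fin n) (Fin m) ℝ)
    (R : Matrix (Fin m) (Fin m) ℝ) (hR : IsUnit R)
    (P₁ P₂ T : Matrix (Fin n) (Fin n) ℝ) (hP₁ : IsUnit P₁)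
    (hInv : Matrix.fromBlocks A (-(B * R⁻¹ * Bᵀ)) (-Q) (-Aᵀ) * Matrix.fromRows P₁ P₂ =
      Matrix.fromRows P₁ P₂ * T) :
    Aᵀ * (P₂ * P₁⁻¹) + (P₂ * P₁⁻¹) * A
      - (P₂ * P₁⁻¹) * B * R⁻¹ * Bᵀ * (P₂ * P₁⁻¹) + Q = 0 := by
  rw [Matrix.fromBlocks_mul_fromRows, Matrix.fromRows_mul, Matrix.fromRows_ext_iff] at hInv
  obtain ⟨h1, h2⟩ := hInv
  have hinv : P₁ * P₁⁻¹ = 1 := Matrix.mul_nonsing_inv _ (Matrix.isUnit_iff_isUnit_det _ |>.mp hP₁)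
  have hinv' : P₁⁻¹ * P₁ = 1 := Matrix.nonsing_inv_mul _ (Matrix.isUnit_iff_isUnit_det _ |>.mp hP₁)
  have key : (-Q * P₁ + -Aᵀ * P₂) * P₁⁻¹ = P₂ * P₁⁻¹ * (A * P₁ + -(B * R⁻¹ * Bᵀ) * P₂) * P₁⁻¹ := by
    rw [h2, h1, ← Matrix.mul_assoc (P₂ * P₁⁻¹) P₁ T, Matrix.mul_assoc P₂ P₁⁻¹ P₁, hinv',
      Matrix.mul_one, Matrix.mul_assoc]
  have expand : -Q - Aᵀ * (P₂ * P₁⁻¹)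
      = P₂ * P₁⁻¹ * A - P₂ * P₁⁻¹ * (B * R⁻¹ * Bᵀ) * (P₂ * P₁⁻¹) := by
    calc -Q - Aᵀ * (P₂ * P₁⁻¹)
        = (-Q * P₁ + -Aᵀ * P₂) * P₁⁻¹ := by
          rw [Matrix.add_mul]
          simp only [Matrix.neg_mul, Matrix.mul_assoc, hinv, Matrix.mul_one]
          abel
      _ = P₂ * P₁⁻¹ * (A * P₁ + -(B * R⁻¹ * Bᵀ) * P₂) * P₁⁻¹ := key
      _ = P₂ * P₁⁻¹ * A - P₂ * P₁⁻¹ * (B * R⁻¹ * Bᵀ) * (P₂ * P₁⁻¹) := by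
          simp only [Matrix.mul_add, Matrix.add_mul, Matrix.neg_mul, Matrix.mul_neg,
            Matrix.mul_assoc, hinv, Matrix.mul_one]
          abel
  linear_combination (norm := (simp only [Matrix.mul_assoc]; noncomm_ring)) -expand
end

section
/- If the pair (A,B) is controllable in the PBH sense and the pair (Q,A) is observable in the PBH sense, then every complex eigenvalue λ of the Hamiltonian matrix H has nonzero real part; in particular H has no purely imaginary and no zero eigenvalues. -/
open Matrix
open ComplexOrder

private lemma mapC_conjTranspose {k1 k2 : ℕ} (M : Matrix (Fin k1) (Fin k2) ℝ) :
    (M.map Complex.ofReal)ᴴ = Mᵀ.map Complex.ofReal := by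
  ext i j; simp [conjTranspose_apply, Complex.conj_ofReal]

private lemma mapC_mul {k1 k2 k3 : ℕ} (M : Matrix (Fin k1) (Fin k2) ℝ)
    (N : Matrix (Fin k2) (Fin k3) ℝ) :
    (M * N).map Complex.ofReal = M.map Complex.ofReal * N.map Complex.ofReal := by
  ext i j; simp [Matrix.mul_apply]

private lemma mapC_posSemidef {k : ℕ} {M : Matrix (Fin k) (Fin k) ℝ} (hM : M.PosSemidef) :
    (M.map Complex.ofReal).PosSemidef := by
  obtain ⟨C, hC⟩ : ∃ C : Matrix (Fin k) (Fin k) ℝ, M = Cᴴ * C := by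
    open MatrixOrder in exact CStarAlgebra.nonneg_iff_eq_star_mul_self.mp hM.nonneg
  have : M.map Complex.ofReal = (C.map Complex.ofReal)ᴴ * (C.map Complex.ofReal) := by
    rw [hC, mapC_mul]; congr 1; rw [mapC_conjTranspose]; rfl
  rw [this]
  exact Matrix.posSemidef_conjTranspose_mul_self _

private lemma mapC_neg {k1 k2 : ℕ} (M : Matrix (Fin k1) (Fin k2) ℝ) :
    (-M).map Complex.ofReal = -(M.map Complex.ofReal) := by
  ext i j; simp


/-- Under PBH controllability of `(A,B)` and PBH observability of `(Q,A)`,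
every complex eigenvalue of the Hamiltonian matrix `H = [[A, −BR⁻¹Bᵀ], [−Q, −Aᵀ]]` has
nonzero real part. -/
theorem hamiltonian_no_imaginary_eigenvalues {n m : ℕ}
    (A Q : Matrix (Fin n) (Fin n) ℝ) (B : Matrix (Fin n) (Fin m) ℝ)
    (R : Matrix (Fin m) (Fin m) ℝ)
    (hQ : Q.PosSemidef) (hR : R.PosDef)
    (hctrb : ∀ (l : ℂ) (y : Fin n → ℂ), y ≠ 0 →
      (A.map Complex.ofReal)ᵀ.mulVec y = l • y → (B.map Complex.ofReal)ᵀ.mulVec y ≠ 0)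
    (hobs : ∀ (l : ℂ) (x : Fin n → ℂ), x ≠ 0 →
      (A.map Complex.ofReal).mulVec x = l • x → (Q.map Complex.ofReal).mulVec x ≠ 0) :
    ∀ (l : ℂ) (v : Fin n ⊕ Fin n → ℂ), v ≠ 0 →
      ((Matrix.fromBlocks A (-(B * R⁻¹ * Bᵀ)) (-Q) (-Aᵀ)).map Complex.ofReal).mulVec v
        = l • v → l.re ≠ 0 := by
  intro l v hv hev hre
  set A' := A.map Complex.ofReal with hA'
  set Q' := Q.map Complex.ofReal with hQ'
  set B' := B.map Complex.ofReal with hB'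
  set Ri' := (R⁻¹).map Complex.ofReal with hRi'
  have hconj : star l = -l := by
    apply Complex.ext <;> simp [hre]
  set x : Fin n → ℂ := v ∘ Sum.inl with hxdef
  set y : Fin n → ℂ := v ∘ Sum.inr with hydef
  have hv' : v = Sum.elim x y := by funext i; cases i <;> rfl
  rw [hv', Matrix.fromBlocks_map, Matrix.fromBlocks_mulVec] at hev
  have h1 : A' *ᵥ x + ((-(B * R⁻¹ * Bᵀ)).map Complex.ofReal) *ᵥ y = l • x :=
    funext fun i => congrFun hev (Sum.inl i)
  have h2 : ((-Q).map Complex.ofReal) *ᵥ x + ((-Aᵀ).map Complex.ofReal) *ᵥ y = l • y :=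
    funext fun i => congrFun hev (Sum.inr i)
  simp only [mapC_neg, neg_mulVec] at h1 h2
  -- identify S' = B' * Ri' * B'ᵀ
  have hSfac : (B * R⁻¹ * Bᵀ).map Complex.ofReal = B' * Ri' * B'ᵀ := by
    rw [mapC_mul, mapC_mul, transpose_map]
  rw [hSfac] at h1
  -- E1 : A' *ᵥ x = l • x + (B' * Ri' * B'ᵀ) *ᵥ y
  have E1 : A' *ᵥ x = l • x + (B' * Ri' * B'ᵀ) *ᵥ y := by
    rw [← h1]; abel
  -- E2 : A'ᵀ *ᵥ y = (-l) • y - Q' *ᵥ x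
  have E2 : A'ᵀ *ᵥ y = (-l) • y - Q' *ᵥ x := by
    have ht : (Aᵀ).map Complex.ofReal = A'ᵀ := by rw [hA', transpose_map]
    rw [ht] at h2
    have h4 : -(A'ᵀ *ᵥ y) = l • y + Q' *ᵥ x := by rw [← h2]; abel
    rw [neg_eq_iff_eq_neg] at h4
    rw [h4, neg_smul]; abel
  -- quadratic forms
  set w : Fin m → ℂ := B'ᵀ *ᵥ y with hwdef
  set α := star x ⬝ᵥ (Q' *ᵥ x) with hαdef
  set β := star w ⬝ᵥ (Ri' *ᵥ w) with hβdef
  have hBdag : B'ᵀᴴ = B' := by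
    ext i j; simp [conjTranspose_apply, hB', Complex.conj_ofReal]
  have hBstar : star w = star y ᵥ* B' := by
    rw [hwdef, star_mulVec, hBdag]
  have hβ' : star y ⬝ᵥ ((B' * Ri' * B'ᵀ) *ᵥ y) = β := by
    rw [hβdef]
    rw [← mulVec_mulVec, ← mulVec_mulVec, dotProduct_mulVec (star y) B']
    congr 1
    exact hBstar.symm
  -- Eq I: star y ⬝ᵥ (A' *ᵥ x) = l * (star y ⬝ᵥ x) + β
  have EqI : star y ⬝ᵥ (A' *ᵥ x) = l * (star y ⬝ᵥ x) + β := by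
    rw [E1, dotProduct_add, dotProduct_smul, smul_eq_mul, hβ']
  -- Eq II: star x ⬝ᵥ (A'ᵀ *ᵥ y) = (-l) * (star x ⬝ᵥ y) - α
  have EqII : star x ⬝ᵥ (A'ᵀ *ᵥ y) = (-l) * (star x ⬝ᵥ y) - α := by
    rw [E2, dotProduct_sub, dotProduct_smul, smul_eq_mul, hαdef]
  -- bridge
  have bridge : star (star y ⬝ᵥ (A' *ᵥ x)) = star x ⬝ᵥ (A'ᵀ *ᵥ y) := by
    rw [star_dotProduct, star_star, dotProduct_mulVec (star x),
      vecMul_transpose, star_mulVec, mapC_conjTranspose]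
    rw [show (Aᵀ).map Complex.ofReal = A'ᵀ from by rw [hA', transpose_map]]
    rw [vecMul_transpose]
  have key : α + star β = 0 := by
    have h3 := congrArg star EqI
    rw [bridge, EqII, star_add, star_mul', ← star_dotProduct] at h3
    rw [show star l = -l from hconj] at h3
    linear_combination -h3
  -- positivity
  have hQc : Q'.PosSemidef := hQ'.symm ▸ mapC_posSemidef hQ
  have hRic : Ri'.PosSemidef := hRi'.symm ▸ mapC_posSemidef hR.inv.posSemidef
  have hα : 0 ≤ α := hQc.dotProduct_mulVec_nonneg x
  have hβpos : 0 ≤ β := hRic.dotProduct_mulVec_nonneg w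
  obtain ⟨hαre, hαim⟩ := Complex.le_def.mp hα
  obtain ⟨hβre, hβim⟩ := Complex.le_def.mp hβpos
  simp only [Complex.zero_re, Complex.zero_im] at hαre hαim hβre hβim
  have hstarβ : star β = β := by
    apply Complex.ext <;> simp [← hβim]
  rw [hstarβ] at key
  have hαzero : α = 0 := by
    apply Complex.ext
    · have hk := congrArg Complex.re key
      rw [Complex.add_re, Complex.zero_re] at hk
      simp only [Complex.zero_re]
      linarith
    · simp [← hαim]
  have hβzero : β = 0 := by
    rw [hαzero, zero_add] at key; exact key
  -- conclude zero vectors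
  have hQx : Q' *ᵥ x = 0 := (hQc.dotProduct_mulVec_zero_iff x).mp hαzero
  have hRiw : Ri' *ᵥ w = 0 := (hRic.dotProduct_mulVec_zero_iff w).mp hβzero
  have hw : w = 0 := by
    have hRR : (R.map Complex.ofReal) * Ri' = 1 := by
      rw [hRi', ← mapC_mul, Matrix.mul_nonsing_inv R (isUnit_iff_ne_zero.mpr hR.det_pos.ne')]
      ext i j; by_cases h : i = j <;> simp [Matrix.one_apply, h]
    calc w = ((R.map Complex.ofReal) * Ri') *ᵥ w := by rw [hRR, one_mulVec]
    _ = (R.map Complex.ofReal) *ᵥ (Ri' *ᵥ w) := by rw [← mulVec_mulVec]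
    _ = 0 := by rw [hRiw, mulVec_zero]
  have hSy : (B' * Ri' * B'ᵀ) *ᵥ y = 0 := by
    rw [← mulVec_mulVec, ← mulVec_mulVec, ← hwdef, hRiw, mulVec_zero]
  have hAx : A' *ᵥ x = l • x := by rw [E1, hSy, add_zero]
  have hAty : A'ᵀ *ᵥ y = (-l) • y := by rw [E2, hQx, sub_zero]
  by_cases hx0 : x = 0
  · have hy0 : y ≠ 0 := by
      intro h
      apply hv
      rw [hv', hx0, h]
      funext i; cases i <;> rfl
    exact hctrb (-l) y hy0 hAty hw
  · exact hobs l x hx0 hAx hQx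
end

section
/- If the pair (A,B) is controllable in the PBH sense and the pair (Q,A) is observable in the PBH sense, then—counting algebraic multiplicity, i.e. in the multiset of complex roots of the characteristic polynomial of H—the Hamiltonian matrix H has exactly n eigenvalues with positive real part and exactly n eigenvalues with negative real part. -/
open Matrix Polynomial
open scoped ComplexOrder

private lemma evalCharpolyDet {ι : Type*} [Fintype ι] [DecidableEq ι]
    (M : Matrix ι ι ℂ) (x : ℂ) :
    M.charpoly.eval x = (x • (1 : Matrix ι ι ℂ) - M).det := by
  rw [Matrix.charpoly, ← Polynomial.coe_evalRingHom, RingHom.map_det]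
  congr 1
  ext i j
  by_cases h : i = j <;>
    simp [h, Matrix.charmatrix_apply, Matrix.diagonal_apply, Matrix.one_apply,
      Matrix.smul_apply, Matrix.sub_apply, Matrix.map_apply]

private lemma mapOfReal_dot {ι : Type*} [Fintype ι] (M : Matrix ι ι ℝ) (u v : ι → ℝ) :
    (fun i => ((u i : ℂ))) ⬝ᵥ (M.map Complex.ofReal) *ᵥ (fun i => ((v i : ℂ)))
      = ((u ⬝ᵥ M *ᵥ v : ℝ) : ℂ) := by
  have h1 : (Complex.ofRealHom : ℝ →+* ℂ) (u ⬝ᵥ (M *ᵥ v)) =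
      (Complex.ofRealHom ∘ u) ⬝ᵥ (Complex.ofRealHom ∘ (M *ᵥ v)) :=
    RingHom.map_dotProduct _ _ _
  have h2 : (Complex.ofRealHom ∘ (M *ᵥ v)) =
      (M.map Complex.ofRealHom) *ᵥ (Complex.ofRealHom ∘ v) := by
    funext i; exact RingHom.map_mulVec _ _ _ i
  rw [h2] at h1
  exact h1.symm

private lemma star_mulVec_ofReal {ι κ : Type*} [Fintype κ] (M : Matrix ι κ ℝ) (v : κ → ℂ) :
    star ((M.map Complex.ofReal) *ᵥ v) = (M.map Complex.ofReal) *ᵥ star v := by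
  funext i
  simp only [Pi.star_apply, Matrix.mulVec, dotProduct, Matrix.map_apply]
  rw [show (star (∑ j, (M i j : ℂ) * v j) = ∑ j, star ((M i j : ℂ) * v j)) from star_sum _ _]
  refine Finset.sum_congr rfl fun j _ => ?_
  simp [Complex.star_def, _root_.map_mul, Complex.conj_ofReal]

private lemma map_mul_ofReal {p q r : Type*} [Fintype q]
    (M : Matrix p q ℝ) (N : Matrix q r ℝ) :
    (M * N).map Complex.ofReal = M.map Complex.ofReal * N.map Complex.ofReal :=
  Matrix.map_mul (L := M) (M := N) (f := Complex.ofRealHom)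

private lemma posSemidef_complexify {ι : Type*} [Fintype ι] {M : Matrix ι ι ℝ}
    (hM : M.PosSemidef) : (M.map Complex.ofReal).PosSemidef := by
  have hsym : Mᵀ = M := by
    have := hM.1.eq
    rwa [Matrix.conjTranspose_eq_transpose_of_trivial] at this
  refine Matrix.PosSemidef.of_dotProduct_mulVec_nonneg ?_ ?_
  · show (M.map Complex.ofReal)ᴴ = M.map Complex.ofReal
    ext i j
    simp only [Matrix.conjTranspose_apply, Matrix.map_apply, Complex.star_def,
      Complex.conj_ofReal]
    rw [show M j i = Mᵀ i j from rfl, hsym]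
  · intro x
    set a : ι → ℝ := fun i => (x i).re with ha
    set b : ι → ℝ := fun i => (x i).im with hb
    have hx : x = (fun i => ((a i : ℂ))) + Complex.I • (fun i => ((b i : ℂ))) := by
      funext i
      simp [ha, hb, Pi.add_apply, Pi.smul_apply, smul_eq_mul]
      rw [mul_comm]
      exact (Complex.re_add_im (x i)).symm
    have hstar : star x = (fun i => ((a i : ℂ))) - Complex.I • (fun i => ((b i : ℂ))) := by
      funext i
      simp [ha, hb, Complex.star_def, Complex.ext_iff]
    have hsymdot : a ⬝ᵥ M *ᵥ b = b ⬝ᵥ M *ᵥ a := by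
      rw [Matrix.dotProduct_mulVec a M b]
      have hvm : a ᵥ* M = M *ᵥ a := by
        conv_lhs => rw [← hsym, Matrix.vecMul_transpose]
      rw [hvm, dotProduct_comm]
    have key : star x ⬝ᵥ (M.map Complex.ofReal) *ᵥ x
        = ((a ⬝ᵥ M *ᵥ a + b ⬝ᵥ M *ᵥ b : ℝ) : ℂ) := by
      rw [hstar]
      nth_rewrite 1 [hx]
      simp only [Matrix.mulVec_add, Matrix.mulVec_smul, sub_dotProduct,
        dotProduct_add, smul_dotProduct, dotProduct_smul]
      rw [mapOfReal_dot M a a, mapOfReal_dot M a b, mapOfReal_dot M b a, mapOfReal_dot M b b,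
        hsymdot]
      simp only [smul_eq_mul]
      push_cast
      ring_nf
      rw [Complex.I_sq]
      ring
    rw [key]
    rw [Complex.zero_le_real]
    have h1 := hM.dotProduct_mulVec_nonneg a
    have h2 := hM.dotProduct_mulVec_nonneg b
    rw [star_trivial] at h1 h2
    positivity

private lemma roots_neg_symm {n : ℕ} (A Q S : Matrix (Fin n) (Fin n) ℝ)
    (hQs : Qᵀ = Q) (hSs : Sᵀ = S) :
    ((Matrix.fromBlocks A (-S) (-Q) (-Aᵀ)).map Complex.ofReal).charpoly.roots =
      (((Matrix.fromBlocks A (-S) (-Q) (-Aᵀ)).map Complex.ofReal).charpoly.roots).map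
        (fun z => -z) := by
  classical
  set Ac := A.map Complex.ofReal with hAc
  set Qc := Q.map Complex.ofReal with hQcdef
  set Sc := S.map Complex.ofReal with hScdef
  have hHc : (Matrix.fromBlocks A (-S) (-Q) (-Aᵀ)).map Complex.ofReal =
      Matrix.fromBlocks Ac (-Sc) (-Qc) (-(Ac)ᵀ) := by
    ext i j
    cases i <;> cases j <;>
      simp [hAc, hQcdef, hScdef, Matrix.map_apply, Matrix.fromBlocks,
        Matrix.transpose_apply]
  rw [hHc]
  set N := Matrix.fromBlocks Ac (-Sc) (-Qc) (-(Ac)ᵀ) with hN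
  set P := N.charpoly with hPdef
  have hQc : Qcᵀ = Qc := by rw [hQcdef, ← Matrix.transpose_map, hQs]
  have hSc : Scᵀ = Sc := by rw [hScdef, ← Matrix.transpose_map, hSs]
  set J : Matrix (Fin n ⊕ Fin n) (Fin n ⊕ Fin n) ℂ :=
    Matrix.fromBlocks 0 1 (-1) 0 with hJ
  have hone : (Matrix.fromBlocks 1 0 0 1 : Matrix (Fin n ⊕ Fin n) (Fin n ⊕ Fin n) ℂ) = 1 :=
    Matrix.fromBlocks_one
  have hJJ : J * J = -1 := by
    rw [hJ, Matrix.fromBlocks_multiply]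
    rw [← hone]
    ext i j
    cases i <;> cases j <;> simp [Matrix.fromBlocks]
  have hsim : Nᵀ = J * N * J := by
    rw [hN, hJ, Matrix.fromBlocks_transpose, Matrix.fromBlocks_multiply,
      Matrix.fromBlocks_multiply]
    simp [hQc, hSc, Matrix.transpose_neg]
  have hcard : Fintype.card (Fin n ⊕ Fin n) = n + n := by simp
  have heven : ((-1 : ℂ)) ^ (Fintype.card (Fin n ⊕ Fin n)) = 1 := by
    rw [hcard]; exact Even.neg_one_pow ⟨n, rfl⟩
  have hdJ : J.det * J.det = 1 := by
    rw [← Matrix.det_mul, hJJ, show (-1 : Matrix (Fin n ⊕ Fin n) (Fin n ⊕ Fin n) ℂ) =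
      -(1 : Matrix (Fin n ⊕ Fin n) (Fin n ⊕ Fin n) ℂ) from rfl, Matrix.det_neg,
      Matrix.det_one, heven, mul_one]
  have hdet : ∀ x : ℂ, (x • (1 : Matrix (Fin n ⊕ Fin n) (Fin n ⊕ Fin n) ℂ) + N).det
      = (x • 1 - N).det := by
    intro x
    have e1 : J * (x • (1 : Matrix (Fin n ⊕ Fin n) (Fin n ⊕ Fin n) ℂ) + N) * J
        = x • (J * J) + J * N * J := by
      rw [Matrix.mul_add, Matrix.add_mul, Matrix.mul_smul, Matrix.smul_mul, Matrix.mul_one]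
    rw [hJJ, ← hsim] at e1
    have e2 : J * (x • (1 : Matrix (Fin n ⊕ Fin n) (Fin n ⊕ Fin n) ℂ) + N) * J
        = -(x • 1 - Nᵀ) := by
      rw [e1, smul_neg, neg_sub, ← sub_eq_neg_add]
    have e3 := congrArg Matrix.det e2
    rw [Matrix.det_mul, Matrix.det_mul, Matrix.det_neg, heven, one_mul] at e3
    have e4 : (x • (1 : Matrix (Fin n ⊕ Fin n) (Fin n ⊕ Fin n) ℂ) + N).det
        = (x • 1 - Nᵀ).det := by
      rw [mul_comm J.det ((x • 1 + N).det), mul_assoc, hdJ, mul_one] at e3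
      exact e3
    rw [e4, ← Matrix.det_transpose (x • 1 - N), Matrix.transpose_sub,
      Matrix.transpose_smul, Matrix.transpose_one]
  have hcomp : P.comp (-X) = P := by
    apply Polynomial.funext
    intro r
    rw [Polynomial.eval_comp]
    simp only [Polynomial.eval_neg, Polynomial.eval_X]
    rw [hPdef, evalCharpolyDet, evalCharpolyDet]
    have e5 : (-r) • (1 : Matrix (Fin n ⊕ Fin n) (Fin n ⊕ Fin n) ℂ) - N = -(r • 1 + N) := by
      rw [neg_smul, neg_add, ← sub_eq_add_neg]
    rw [e5, Matrix.det_neg, heven, one_mul, hdet r]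
  have hmon : P.Monic := N.charpoly_monic
  have hsplits : P.Splits := IsAlgClosed.splits P
  have hcardroots : Multiset.card P.roots = n + n := by
    rw [Polynomial.splits_iff_card_roots.mp hsplits, hPdef,
      Matrix.charpoly_natDegree_eq_dim, hcard]
  have hprod := hsplits.eq_prod_roots_of_monic hmon
  have key : P = ((P.roots.map (fun z => -z)).map fun a => X - C a).prod := by
    conv_lhs => rw [← hcomp]
    conv_lhs => rw [hprod]
    rw [Polynomial.multiset_prod_comp, Multiset.map_map]
    simp only [Function.comp_def]
    have hlin : ∀ a : ℂ, ((X - C a).comp (-X) : ℂ[X]) = -(X - C (-a)) := by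
      intro a
      simp only [Polynomial.sub_comp, Polynomial.X_comp, Polynomial.C_comp, map_neg]
      ring
    rw [Multiset.map_congr rfl (fun a _ => hlin a)]
    rw [show ((fun a : ℂ => -(X - C (-a))) : ℂ → ℂ[X])
      = (Neg.neg ∘ fun a : ℂ => X - C (-a)) from rfl]
    rw [← Multiset.map_map, Multiset.prod_map_neg, Multiset.card_map, hcardroots,
      Even.neg_one_pow ⟨n, rfl⟩, one_mul]
    rw [show ((fun a : ℂ => X - C (-a)) : ℂ → ℂ[X])
      = ((fun a : ℂ => X - C a) ∘ fun z : ℂ => -z) from rfl, ← Multiset.map_map]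
  conv_lhs => rw [key, Polynomial.roots_multiset_prod_X_sub_C]

private lemma no_imaginary_root {n m : ℕ}
    (A Q : Matrix (Fin n) (Fin n) ℝ) (B : Matrix (Fin n) (Fin m) ℝ)
    (R : Matrix (Fin m) (Fin m) ℝ)
    (hQ : Q.PosSemidef) (hR : R.PosDef)
    (hctrb : ∀ (l : ℂ) (y : Fin n → ℂ), y ≠ 0 →
      (A.map Complex.ofReal)ᵀ.mulVec y = l • y → (B.map Complex.ofReal)ᵀ.mulVec y ≠ 0)
    (hobs : ∀ (l : ℂ) (x : Fin n → ℂ), x ≠ 0 →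
      (A.map Complex.ofReal).mulVec x = l • x → (Q.map Complex.ofReal).mulVec x ≠ 0)
    (z : ℂ) (hz : z.re = 0) (v : Fin n ⊕ Fin n → ℂ) (hv : v ≠ 0)
    (hveq : ((Matrix.fromBlocks A (-(B * R⁻¹ * Bᵀ)) (-Q) (-Aᵀ)).map Complex.ofReal) *ᵥ v
      = z • v) : False := by
  classical
  set Ac := A.map Complex.ofReal with hAc
  set Qc := Q.map Complex.ofReal with hQcdef
  set Bc := B.map Complex.ofReal with hBc
  set Btc := Bᵀ.map Complex.ofReal with hBtc
  set Nc := (R⁻¹).map Complex.ofReal with hNc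
  set Sc := (B * R⁻¹ * Bᵀ).map Complex.ofReal with hScdef
  set x : Fin n → ℂ := fun i => v (Sum.inl i) with hx
  set y : Fin n → ℂ := fun i => v (Sum.inr i) with hy
  have hvxy : v = Sum.elim x y := by funext i; cases i <;> rfl
  have hHc : (Matrix.fromBlocks A (-(B * R⁻¹ * Bᵀ)) (-Q) (-Aᵀ)).map Complex.ofReal =
      Matrix.fromBlocks Ac (-Sc) (-Qc) (-(Ac)ᵀ) := by
    ext i j
    cases i <;> cases j <;>
      simp [hAc, hQcdef, hScdef, Matrix.map_apply, Matrix.fromBlocks,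
        Matrix.transpose_apply]
  rw [hHc, hvxy] at hveq
  rw [Matrix.fromBlocks_mulVec] at hveq
  have E1 : Ac *ᵥ x + (-Sc) *ᵥ y = z • x := by
    funext i
    have := congrFun hveq (Sum.inl i)
    simpa using this
  have E2 : (-Qc) *ᵥ x + (-(Ac)ᵀ) *ᵥ y = z • y := by
    funext i
    have := congrFun hveq (Sum.inr i)
    simpa using this
  have hQcpsd : Qc.PosSemidef := posSemidef_complexify hQ
  have hNpsd : Nc.PosSemidef := posSemidef_complexify hR.inv.posSemidef
  have hBct : Bcᵀ = Btc := by rw [hBc, hBtc, Matrix.transpose_map]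
  have hScsplit : Sc = Bc * Nc * Btc := by
    rw [hScdef, map_mul_ofReal, map_mul_ofReal]
  set w : Fin m → ℂ := Btc *ᵥ y with hw
  have hstarw : star w = Btc *ᵥ star y := by
    rw [hw, hBtc, star_mulVec_ofReal]
  have hm : star y ⬝ᵥ Sc *ᵥ y = star w ⬝ᵥ Nc *ᵥ w := by
    rw [hScsplit, ← Matrix.mulVec_mulVec, ← Matrix.mulVec_mulVec,
      Matrix.dotProduct_mulVec (star y) Bc _]
    congr 1
    rw [hstarw, ← hBct, ← Matrix.mulVec_transpose]
  set qQ := star x ⬝ᵥ Qc *ᵥ x with hqQ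
  set qM := star y ⬝ᵥ Sc *ᵥ y with hqM
  have s1 : star y ⬝ᵥ Ac *ᵥ x + -qM = z * (star y ⬝ᵥ x) := by
    have := congrArg (fun u => star y ⬝ᵥ u) E1
    simpa [dotProduct_add, Matrix.neg_mulVec, dotProduct_neg,
      dotProduct_smul, smul_eq_mul] using this
  have s2 : -qQ + -(star x ⬝ᵥ (Ac)ᵀ *ᵥ y) = z * (star x ⬝ᵥ y) := by
    have := congrArg (fun u => star x ⬝ᵥ u) E2
    simpa [dotProduct_add, Matrix.neg_mulVec, dotProduct_neg,
      dotProduct_smul, smul_eq_mul] using this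
  have hconjz : (starRingEnd ℂ) z = -z := by
    apply Complex.ext <;> simp [hz]
  have hqQ0 : 0 ≤ qQ := hQcpsd.dotProduct_mulVec_nonneg x
  have hqM0 : 0 ≤ qM := by rw [hm]; exact hNpsd.dotProduct_mulVec_nonneg w
  have hqQreal : (starRingEnd ℂ) qQ = qQ := by
    rw [Complex.conj_eq_iff_im]
    have := Complex.le_def.mp hqQ0
    simpa using this.2.symm
  have hAt : (Ac)ᵀ = Aᵀ.map Complex.ofReal := by rw [hAc, Matrix.transpose_map]
  have hstaru : star ((Ac)ᵀ *ᵥ y) = (Ac)ᵀ *ᵥ star y := by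
    rw [hAt, star_mulVec_ofReal]
  have hc2 : (starRingEnd ℂ) (star x ⬝ᵥ (Ac)ᵀ *ᵥ y) = star y ⬝ᵥ Ac *ᵥ x := by
    calc (starRingEnd ℂ) (star x ⬝ᵥ (Ac)ᵀ *ᵥ y)
        = star (star x ⬝ᵥ (Ac)ᵀ *ᵥ y) := rfl
      _ = star (star (star ((Ac)ᵀ *ᵥ y) ⬝ᵥ x)) := congrArg star (star_dotProduct x _)
      _ = star ((Ac)ᵀ *ᵥ y) ⬝ᵥ x := star_star _
      _ = ((Ac)ᵀ *ᵥ star y) ⬝ᵥ x := by rw [hstaru]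
      _ = (star y ᵥ* Ac) ⬝ᵥ x := by rw [Matrix.mulVec_transpose]
      _ = star y ⬝ᵥ Ac *ᵥ x := (Matrix.dotProduct_mulVec _ _ _).symm
  have hc3 : (starRingEnd ℂ) (star x ⬝ᵥ y) = star y ⬝ᵥ x := by
    calc (starRingEnd ℂ) (star x ⬝ᵥ y) = star (star x ⬝ᵥ y) := rfl
      _ = star (star (star y ⬝ᵥ x)) := congrArg star (star_dotProduct x y)
      _ = star y ⬝ᵥ x := star_star _
  have cs2 : -qQ + -(star y ⬝ᵥ Ac *ᵥ x) = -z * (star y ⬝ᵥ x) := by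
    have := congrArg (starRingEnd ℂ) s2
    rw [_root_.map_add, _root_.map_neg, _root_.map_neg, _root_.map_mul, hqQreal,
      hc2, hconjz, hc3] at this
    exact this
  have hsum : qQ + qM = 0 := by linear_combination -s1 - cs2
  have hzero := (add_eq_zero_iff_of_nonneg hqQ0 hqM0).mp hsum
  have hQx : Qc *ᵥ x = 0 := (hQcpsd.dotProduct_mulVec_zero_iff x).mp hzero.1
  have hNw : Nc *ᵥ w = 0 := by
    apply (hNpsd.dotProduct_mulVec_zero_iff w).mp
    rw [← hm]
    exact hzero.2
  have hRdet : IsUnit R.det := isUnit_iff_ne_zero.mpr hR.det_pos.ne'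
  have hRN : (R.map Complex.ofReal) * Nc = 1 := by
    rw [hNc, ← map_mul_ofReal, Matrix.mul_nonsing_inv R hRdet]
    exact Matrix.map_one _ Complex.ofReal_zero Complex.ofReal_one
  have hw0 : w = 0 := by
    have h1 : (R.map Complex.ofReal) *ᵥ (Nc *ᵥ w) = 0 := by
      rw [hNw, Matrix.mulVec_zero]
    rwa [Matrix.mulVec_mulVec, hRN, Matrix.one_mulVec] at h1
  have hSy : Sc *ᵥ y = 0 := by
    rw [hScsplit, ← Matrix.mulVec_mulVec, ← Matrix.mulVec_mulVec, ← hw, hNw,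
      Matrix.mulVec_zero]
  have E1' : Ac *ᵥ x = z • x := by
    rw [Matrix.neg_mulVec, hSy, neg_zero, add_zero] at E1
    exact E1
  have E2' : (Ac)ᵀ *ᵥ y = (-z) • y := by
    rw [Matrix.neg_mulVec, Matrix.neg_mulVec, hQx, neg_zero, zero_add] at E2
    rw [neg_smul, ← E2, neg_neg]
  by_cases hxz : x = 0
  · have hyz : y ≠ 0 := by
      intro h
      apply hv
      rw [hvxy, hxz, h]
      funext i
      cases i <;> rfl
    have := hctrb (-z) y hyz E2'
    apply this
    rw [hBct, ← hw]
    exact hw0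
  · exact hobs z x hxz E1' hQx

/-- Under PBH controllability of `(A,B)` and PBH observability of `(Q,A)`,
counting algebraic multiplicity (roots of the characteristic polynomial), the Hamiltonian
matrix `H = [[A, −BR⁻¹Bᵀ], [−Q, −Aᵀ]]` has exactly `n` eigenvalues with positive real part
and exactly `n` eigenvalues with negative real part. -/
theorem hamiltonian_eigenvalue_count {n m : ℕ}
    (A Q : Matrix (Fin n) (Fin n) ℝ) (B : Matrix (Fin n) (Fin m) ℝ)
    (R : Matrix (Fin m) (Fin m) ℝ)
    (hQ : Q.PosSemidef) (hR : R.PosDef)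
    (hctrb : ∀ (l : ℂ) (y : Fin n → ℂ), y ≠ 0 →
      (A.map Complex.ofReal)ᵀ.mulVec y = l • y → (B.map Complex.ofReal)ᵀ.mulVec y ≠ 0)
    (hobs : ∀ (l : ℂ) (x : Fin n → ℂ), x ≠ 0 →
      (A.map Complex.ofReal).mulVec x = l • x → (Q.map Complex.ofReal).mulVec x ≠ 0) :
    Multiset.card
        ((((Matrix.fromBlocks A (-(B * R⁻¹ * Bᵀ)) (-Q) (-Aᵀ)).map
            Complex.ofReal).charpoly.roots).filter fun z => 0 < z.re) = n ∧
    Multiset.card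
        ((((Matrix.fromBlocks A (-(B * R⁻¹ * Bᵀ)) (-Q) (-Aᵀ)).map
            Complex.ofReal).charpoly.roots).filter fun z => z.re < 0) = n := by
  classical
  set P := ((Matrix.fromBlocks A (-(B * R⁻¹ * Bᵀ)) (-Q) (-Aᵀ)).map
      Complex.ofReal).charpoly with hPdef
  have hsplits : P.Splits := IsAlgClosed.splits P
  have hcardroots : Multiset.card P.roots = n + n := by
    rw [Polynomial.splits_iff_card_roots.mp hsplits, hPdef,
      Matrix.charpoly_natDegree_eq_dim]
    simp
  have hQs : Qᵀ = Q := by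
    have := hQ.1.eq
    rwa [Matrix.conjTranspose_eq_transpose_of_trivial] at this
  have hRs : Rᵀ = R := by
    have := hR.1.eq
    rwa [Matrix.conjTranspose_eq_transpose_of_trivial] at this
  have hSs : (B * R⁻¹ * Bᵀ)ᵀ = B * R⁻¹ * Bᵀ := by
    rw [Matrix.transpose_mul, Matrix.transpose_mul, Matrix.transpose_transpose,
      Matrix.transpose_nonsing_inv, hRs, Matrix.mul_assoc]
  have hneg : P.roots = P.roots.map (fun z => -z) := roots_neg_symm A Q _ hQs hSs
  have hnoim : ∀ z ∈ P.roots, z.re ≠ 0 := by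
    intro z hz hre
    have hz0 : P.eval z = 0 := (Polynomial.isRoot_of_mem_roots hz)
    rw [hPdef, evalCharpolyDet] at hz0
    obtain ⟨v, hv0, hveq⟩ := Matrix.exists_mulVec_eq_zero_iff.mpr hz0
    refine no_imaginary_root A Q B R hQ hR hctrb hobs z hre v hv0 ?_
    rw [Matrix.sub_mulVec, Matrix.smul_mulVec, Matrix.one_mulVec] at hveq
    exact (sub_eq_zero.mp hveq).symm
  have hfilterneg : P.roots.filter (fun z => ¬ 0 < z.re)
      = P.roots.filter (fun z => z.re < 0) := by
    apply Multiset.filter_congr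
    intro z hz
    simp only [not_lt]
    exact ⟨fun h => lt_of_le_of_ne h (hnoim z hz), le_of_lt⟩
  have htot : Multiset.card (P.roots.filter fun z => 0 < z.re)
      + Multiset.card (P.roots.filter fun z => z.re < 0) = n + n := by
    rw [← hfilterneg, ← Multiset.card_add, Multiset.filter_add_not, hcardroots]
  have hsymm : Multiset.card (P.roots.filter fun z => z.re < 0)
      = Multiset.card (P.roots.filter fun z => 0 < z.re) := by
    conv_lhs => rw [hneg]
    rw [Multiset.filter_map, Multiset.card_map]
    congr 1
    apply Multiset.filter_congr
    intro z hz
    simp [Function.comp]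
  constructor <;> omega
end

section
/- Suppose P₁, P₂ are complex n×n matrices and Λ₁ is a complex n×n diagonal matrix such that H·[P₁; P₂] = [P₁; P₂]·Λ₁ (matrices regarded over ℂ), and suppose P₁ is invertible. Let P := P₂·P₁⁻¹. Then the closed-loop matrix A_cl := A − BR⁻¹BᵀP satisfies A_cl = P₁·Λ₁·P₁⁻¹; in particular the eigenvalues of A_cl are exactly the diagonal entries of Λ₁. -/
open Matrix

/-- If `H·[P₁;P₂] = [P₁;P₂]·Λ₁` over `ℂ` with `Λ₁` diagonal and `P₁`
invertible, then the closed-loop matrix `A_cl = A − BR⁻¹Bᵀ·(P₂P₁⁻¹)` equals `P₁·Λ₁·P₁⁻¹`;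
in particular its eigenvalues are exactly the diagonal entries of `Λ₁`. -/
theorem closed_loop_eigenvalues {n m : ℕ}
    (A Q : Matrix (Fin n) (Fin n) ℝ) (B : Matrix (Fin n) (Fin m) ℝ)
    (R : Matrix (Fin m) (Fin m) ℝ) (hR : IsUnit R)
    (P₁ P₂ Λ : Matrix (Fin n) (Fin n) ℂ) (hΛ : Λ.IsDiag) (hP₁ : IsUnit P₁)
    (hInv :
      Matrix.fromBlocks (A.map Complex.ofReal)
          (-((B.map Complex.ofReal) * (R.map Complex.ofReal)⁻¹ * (B.map Complex.ofReal)ᵀ))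
          (-(Q.map Complex.ofReal)) (-(A.map Complex.ofReal)ᵀ) * Matrix.fromRows P₁ P₂ =
        Matrix.fromRows P₁ P₂ * Λ) :
    A.map Complex.ofReal -
        (B.map Complex.ofReal) * (R.map Complex.ofReal)⁻¹ * (B.map Complex.ofReal)ᵀ *
          (P₂ * P₁⁻¹) = P₁ * Λ * P₁⁻¹ ∧
    ∀ μ : ℂ,
      (∃ v : Fin n → ℂ, v ≠ 0 ∧
        (A.map Complex.ofReal -
          (B.map Complex.ofReal) * (R.map Complex.ofReal)⁻¹ * (B.map Complex.ofReal)ᵀ *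
            (P₂ * P₁⁻¹)).mulVec v = μ • v) ↔ ∃ i : Fin n, Λ i i = μ := by
  set A' := A.map Complex.ofReal
  set S := (B.map Complex.ofReal) * (R.map Complex.ofReal)⁻¹ * (B.map Complex.ofReal)ᵀ with hS
  have hdet : IsUnit P₁.det := (Matrix.isUnit_iff_isUnit_det P₁).mp hP₁
  have hPP : P₁ * P₁⁻¹ = 1 := Matrix.mul_nonsing_inv _ hdet
  have hPP' : P₁⁻¹ * P₁ = 1 := Matrix.nonsing_inv_mul _ hdet
  have htop : A' * P₁ + (-S) * P₂ = P₁ * Λ := by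
    rw [Matrix.fromBlocks_mul_fromRows, Matrix.fromRows_mul] at hInv
    exact (Matrix.fromRows_inj.eq_iff.mp hInv).1
  have hcl : A' - S * (P₂ * P₁⁻¹) = P₁ * Λ * P₁⁻¹ := by
    have h2 := congrArg (· * P₁⁻¹) htop
    simp only [add_mul, neg_mul, mul_assoc, hPP, mul_one] at h2
    rw [sub_eq_add_neg, h2, mul_assoc]
  refine ⟨hcl, fun μ => ?_⟩
  rw [hcl]
  constructor
  · rintro ⟨v, hv, hMv⟩
    set w := P₁⁻¹.mulVec v with hw
    have hwne : w ≠ 0 := by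
      intro h
      apply hv
      have : P₁.mulVec w = v := by
        rw [hw, Matrix.mulVec_mulVec, hPP, Matrix.one_mulVec]
      rw [h, Matrix.mulVec_zero] at this
      exact this.symm
    have hΛw : Λ.mulVec w = μ • w := by
      have h3 : P₁⁻¹.mulVec ((P₁ * Λ * P₁⁻¹).mulVec v) = P₁⁻¹.mulVec (μ • v) := by rw [hMv]
      rw [Matrix.mulVec_mulVec, Matrix.mulVec_smul, ← mul_assoc, ← mul_assoc, hPP', one_mul,
        ← Matrix.mulVec_mulVec] at h3
      exact h3
    obtain ⟨i, hi⟩ := Function.ne_iff.mp hwne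
    refine ⟨i, ?_⟩
    have hval : (Λ.mulVec w) i = Λ i i * w i := by
      rw [Matrix.mulVec, dotProduct]
      exact Finset.sum_eq_single i (fun j _ hj => by rw [hΛ (Ne.symm hj), zero_mul])
        (fun h => absurd (Finset.mem_univ i) h)
    have : Λ i i * w i = μ * w i := by
      rw [← hval, hΛw]; rfl
    exact mul_right_cancel₀ hi this
  · rintro ⟨i, hi⟩
    refine ⟨P₁.mulVec (Pi.single i 1), ?_, ?_⟩
    · intro h
      have : P₁⁻¹.mulVec (P₁.mulVec (Pi.single i 1)) = Pi.single i 1 := by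
        rw [Matrix.mulVec_mulVec, hPP', Matrix.one_mulVec]
      rw [h, Matrix.mulVec_zero] at this
      have := congrFun this i
      simp at this
    · have hsingle : Λ.mulVec (Pi.single i 1) = μ • (Pi.single i 1 : Fin n → ℂ) := by
        funext j
        rw [Matrix.mulVec_single]
        rcases eq_or_ne j i with rfl | hj
        · simp [hi]
        · simp [hΛ hj, Pi.single_eq_of_ne hj]
      rw [Matrix.mulVec_mulVec, mul_assoc, ← Matrix.mulVec_mulVec, ← Matrix.mulVec_mulVec,
        Matrix.mulVec_mulVec, hPP', Matrix.one_mulVec]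
      rw [← Matrix.mulVec_mulVec, hsingle, Matrix.mulVec_smul]
end

section
/- Suppose P₁, P₂ are complex n×n matrices and Λ₁ is a complex n×n diagonal matrix with diagonal entries λ₁,…,λₙ such that H·[P₁; P₂] = [P₁; P₂]·Λ₁ (matrices regarded over ℂ), and suppose P₁ is invertible. Then the closed-loop matrix A_cl := A − BR⁻¹Bᵀ·P₂·P₁⁻¹ is Hurwitz (every complex eigenvalue of A_cl has negative real part) if and only if Re(λᵢ) < 0 for every i = 1,…,n. -/
open Matrix

/-- If `H·[P₁;P₂] = [P₁;P₂]·Λ₁` over `ℂ` with `Λ₁` diagonal and `P₁`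
invertible, then the closed-loop matrix `A_cl = A − BR⁻¹Bᵀ·P₂P₁⁻¹` is Hurwitz (every
complex eigenvalue has negative real part) iff every diagonal entry of `Λ₁` has negative
real part. -/
theorem closed_loop_hurwitz_iff {n m : ℕ}
    (A Q : Matrix (Fin n) (Fin n) ℝ) (B : Matrix (Fin n) (Fin m) ℝ)
    (R : Matrix (Fin m) (Fin m) ℝ) (hR : IsUnit R)
    (P₁ P₂ Λ : Matrix (Fin n) (Fin n) ℂ) (hΛ : Λ.IsDiag) (hP₁ : IsUnit P₁)
    (hInv :
      Matrix.fromBlocks (A.map Complex.ofReal)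
          (-((B.map Complex.ofReal) * (R.map Complex.ofReal)⁻¹ * (B.map Complex.ofReal)ᵀ))
          (-(Q.map Complex.ofReal)) (-(A.map Complex.ofReal)ᵀ) * Matrix.fromRows P₁ P₂ =
        Matrix.fromRows P₁ P₂ * Λ) :
    (∀ μ : ℂ,
      (∃ v : Fin n → ℂ, v ≠ 0 ∧
        (A.map Complex.ofReal -
          (B.map Complex.ofReal) * (R.map Complex.ofReal)⁻¹ * (B.map Complex.ofReal)ᵀ *
            (P₂ * P₁⁻¹)).mulVec v = μ • v) → μ.re < 0) ↔
      ∀ i : Fin n, (Λ i i).re < 0 := by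
  set Aℂ := A.map Complex.ofReal with hAℂ
  set S := (B.map Complex.ofReal) * (R.map Complex.ofReal)⁻¹ * (B.map Complex.ofReal)ᵀ with hS
  set M := Aℂ - S * (P₂ * P₁⁻¹) with hM
  have hdet : IsUnit P₁.det := (Matrix.isUnit_iff_isUnit_det P₁).mp hP₁
  have hinvmul : P₁⁻¹ * P₁ = 1 := Matrix.nonsing_inv_mul P₁ hdet
  have hmulinv : P₁ * P₁⁻¹ = 1 := Matrix.mul_nonsing_inv P₁ hdet
  -- Extract the top block equation
  have htop : Aℂ * P₁ - S * P₂ = P₁ * Λ := by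
    ext i j
    have h := congrFun (congrFun hInv (Sum.inl i)) j
    simp only [Matrix.mul_apply, Matrix.fromBlocks_apply₁₁, Matrix.fromBlocks_apply₁₂,
      Matrix.fromRows_apply_inl, Matrix.fromRows_apply_inr,
      Fintype.sum_sum_type, Matrix.of_apply, Sum.elim_inl, Matrix.neg_apply] at h
    simp only [Matrix.sub_apply, Matrix.mul_apply]
    rw [← h]
    simp [Finset.sum_sub_distrib, sub_eq_add_neg]
  have key : M * P₁ = P₁ * Λ := by
    rw [hM, Matrix.sub_mul, ← htop]
    congr 1
    rw [Matrix.mul_assoc S, Matrix.mul_assoc P₂, hinvmul, Matrix.mul_one]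
  constructor
  · intro h i
    set e : Fin n → ℂ := Pi.single i 1 with he
    have hev : M.mulVec (P₁.mulVec e) = (Λ i i) • P₁.mulVec e := by
      rw [Matrix.mulVec_mulVec, key, ← Matrix.mulVec_mulVec]
      have hΛv : Λ.mulVec e = (Λ i i) • e := by
        ext j
        simp only [Matrix.mulVec, dotProduct, Pi.smul_apply, smul_eq_mul]
        rw [Finset.sum_eq_single i]
        · by_cases hji : j = i
          · subst hji; simp [he]
          · simp [he, Pi.single_apply, hji, hΛ hji]
        · intro b _ hb; simp [he, Pi.single_apply, hb]
        · simp
      rw [hΛv, Matrix.mulVec_smul]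
    refine h (Λ i i) ⟨P₁.mulVec e, ?_, hev⟩
    intro hc
    have : (P₁⁻¹ * P₁).mulVec e = 0 := by
      rw [← Matrix.mulVec_mulVec, hc, Matrix.mulVec_zero]
    rw [hinvmul, Matrix.one_mulVec] at this
    simpa [he] using congrFun this i
  · rintro h μ ⟨v, hv, hev⟩
    set w := P₁⁻¹.mulVec v with hw
    have hPw : P₁.mulVec w = v := by
      rw [hw, Matrix.mulVec_mulVec, hmulinv, Matrix.one_mulVec]
    have hweq : Λ.mulVec w = μ • w := by
      have h1 : P₁.mulVec (Λ.mulVec w) = P₁.mulVec (μ • w) := by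
        rw [Matrix.mulVec_mulVec, ← key, ← Matrix.mulVec_mulVec, hPw, hev,
          Matrix.mulVec_smul, hPw]
      have := congrArg (P₁⁻¹.mulVec) h1
      simp only [Matrix.mulVec_mulVec, ← Matrix.mul_assoc, hinvmul, Matrix.one_mul,
        Matrix.one_mulVec] at this
      exact this
    have hwne : w ≠ 0 := by
      intro hc
      exact hv (by rw [← hPw, hc, Matrix.mulVec_zero])
    obtain ⟨i, hi⟩ := Function.ne_iff.mp hwne
    have : Λ i i * w i = μ * w i := by
      have hli := congrFun hweq i
      simp only [Matrix.mulVec, dotProduct, Pi.smul_apply, smul_eq_mul] at hli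
      rw [Finset.sum_eq_single i] at hli
      · exact hli
      · intro b _ hb; rw [hΛ (Ne.symm hb), zero_mul]
      · simp
    have hμ : Λ i i = μ := by
      have := mul_right_cancel₀ (by simpa using hi) this
      exact this
    rw [← hμ]; exact h i
end

section
/- Suppose P and P′ are symmetric real n×n matrices that both satisfy the continuous-time algebraic Riccati equation AᵀP + PA − PBR⁻¹BᵀP + Q = 0, and suppose both closed-loop matrices A − BR⁻¹BᵀP and A − BR⁻¹BᵀP′ are Hurwitz (every complex eigenvalue has negative real part). Then P = P′. In other words, at most one symmetric solution of the Riccati equation yields a stable closed-loop system. -/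
open Matrix

/-- At most one symmetric solution of the continuous-time algebraic
Riccati equation yields a Hurwitz (stable) closed-loop matrix. -/
theorem stabilizing_care_solution_unique {n m : ℕ}
    (A Q : Matrix (Fin n) (Fin n) ℝ) (B : Matrix (Fin n) (Fin m) ℝ)
    (R : Matrix (Fin m) (Fin m) ℝ) (hRsymm : R.IsSymm) (hR : IsUnit R)
    (P P' : Matrix (Fin n) (Fin n) ℝ) (hPsymm : P.IsSymm) (hP'symm : P'.IsSymm)
    (hP : Aᵀ * P + P * A - P * B * R⁻¹ * Bᵀ * P + Q = 0)
    (hP' : Aᵀ * P' + P' * A - P' * B * R⁻¹ * Bᵀ * P' + Q = 0)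
    (hHurwitz : ∀ (μ : ℂ) (v : Fin n → ℂ), v ≠ 0 →
      ((A - B * R⁻¹ * Bᵀ * P).map Complex.ofReal).mulVec v = μ • v → μ.re < 0)
    (hHurwitz' : ∀ (μ : ℂ) (v : Fin n → ℂ), v ≠ 0 →
      ((A - B * R⁻¹ * Bᵀ * P').map Complex.ofReal).mulVec v = μ • v → μ.re < 0) :
    P = P' := by
  classical
  set S : Matrix (Fin n) (Fin n) ℝ := B * R⁻¹ * Bᵀ with hS
  have hRinv : (R⁻¹)ᵀ = R⁻¹ := by rw [Matrix.transpose_nonsing_inv, hRsymm.eq]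
  have hSsymm : Sᵀ = S := by
    simp only [hS, Matrix.transpose_mul, Matrix.transpose_transpose, hRinv, Matrix.mul_assoc]
  have hP2 : Aᵀ * P + P * A - P * S * P + Q = 0 := by
    rw [hS]; simp only [← Matrix.mul_assoc]; exact hP
  have hP'2 : Aᵀ * P' + P' * A - P' * S * P' + Q = 0 := by
    rw [hS]; simp only [← Matrix.mul_assoc]; exact hP'
  have key : (A - S * P)ᵀ * (P - P') + (P - P') * (A - S * P') = 0 := by
    have e1 : (A - S * P)ᵀ = Aᵀ - P * S := by
      rw [Matrix.transpose_sub, Matrix.transpose_mul, hSsymm, hPsymm.eq]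
    calc (A - S * P)ᵀ * (P - P') + (P - P') * (A - S * P')
        = (Aᵀ * P + P * A - P * S * P + Q) - (Aᵀ * P' + P' * A - P' * S * P' + Q) := by
          rw [e1]; noncomm_ring
      _ = 0 := by rw [hP2, hP'2, sub_zero]
  -- complexify
  set φ : Matrix (Fin n) (Fin n) ℝ →+* Matrix (Fin n) (Fin n) ℂ :=
    Complex.ofRealHom.mapMatrix with hφ
  have hφ_apply : ∀ M : Matrix (Fin n) (Fin n) ℝ, φ M = M.map Complex.ofReal := by
    intro M; rfl
  set A1 : Matrix (Fin n) (Fin n) ℂ := (A - S * P).map Complex.ofReal with hA1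
  set A2 : Matrix (Fin n) (Fin n) ℂ := (A - S * P').map Complex.ofReal with hA2
  set Δ : Matrix (Fin n) (Fin n) ℂ := (P - P').map Complex.ofReal with hΔ
  have keyC : A1ᵀ * Δ + Δ * A2 = 0 := by
    have := congrArg φ key
    rw [map_add, _root_.map_mul, _root_.map_mul, map_zero] at this
    simp only [hφ_apply, Matrix.transpose_map] at this
    exact this
  have hA1Δ : A1ᵀ * Δ = -(Δ * A2) := by
    have := keyC; linear_combination (norm := noncomm_ring) this
  -- key claim: Δ kills all generalized eigenvectors of A2
  have claim : ∀ (k : ℕ) (μ : ℂ) (v : Fin n → ℂ),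
      ((A2 - μ • 1) ^ k).mulVec v = 0 → Δ.mulVec v = 0 := by
    intro k
    induction k with
    | zero =>
      intro μ v hv
      simp only [pow_zero, Matrix.one_mulVec] at hv
      simp [hv]
    | succ k ih =>
      intro μ v hv
      by_contra hne
      have hv0 : v ≠ 0 := by rintro rfl; exact hne (by simp)
      -- Re μ < 0 since μ is an eigenvalue of A2
      have hdet : ((A2 - μ • 1) ^ (k + 1)).det = 0 :=
        Matrix.exists_mulVec_eq_zero_iff.mp ⟨v, hv0, hv⟩
      have hdet1 : (A2 - μ • 1).det = 0 := by
        rw [Matrix.det_pow] at hdet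
        exact pow_eq_zero_iff (Nat.succ_ne_zero k) |>.mp hdet
      obtain ⟨w, hw0, hw⟩ := Matrix.exists_mulVec_eq_zero_iff.mpr hdet1
      have hweig : A2.mulVec w = μ • w := by
        have := hw
        rw [Matrix.sub_mulVec, Matrix.smul_mulVec, Matrix.one_mulVec,
          sub_eq_zero] at this
        exact this
      have hμ : μ.re < 0 := hHurwitz' μ w hw0 hweig
      -- Δ kills w' := (A2 - μ•1) v
      set w' : Fin n → ℂ := (A2 - μ • 1).mulVec v with hw'
      have hΔw' : Δ.mulVec w' = 0 := by
        apply ih μ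
        rw [hw', Matrix.mulVec_mulVec, ← pow_succ]
        exact hv
      -- u := Δ v is an eigenvector of A1ᵀ with eigenvalue -μ
      set u : Fin n → ℂ := Δ.mulVec v with hu
      have hA2v : A2.mulVec v = μ • v + w' := by
        rw [hw', Matrix.sub_mulVec, Matrix.smul_mulVec, Matrix.one_mulVec]
        abel
      have hueig : A1ᵀ.mulVec u = (-μ) • u := by
        rw [hu, Matrix.mulVec_mulVec, hA1Δ]
        have : (Δ * A2).mulVec v = μ • u := by
          rw [← Matrix.mulVec_mulVec, hA2v, Matrix.mulVec_add, Matrix.mulVec_smul, hΔw',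
            add_zero, hu]
        rw [Matrix.neg_mulVec, this, neg_smul]
      -- hence -μ is an eigenvalue of A1, contradiction
      have hdetT : (A1ᵀ - (-μ) • 1).det = 0 := by
        apply Matrix.exists_mulVec_eq_zero_iff.mp
        refine ⟨u, hne, ?_⟩
        rw [Matrix.sub_mulVec, Matrix.smul_mulVec, Matrix.one_mulVec, hueig, sub_self]
      have hdetA1 : (A1 - (-μ) • 1).det = 0 := by
        rw [← Matrix.det_transpose, Matrix.transpose_sub, Matrix.transpose_smul,
          Matrix.transpose_one]
        exact hdetT
      obtain ⟨z, hz0, hz⟩ := Matrix.exists_mulVec_eq_zero_iff.mpr hdetA1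
      have hzeig : A1.mulVec z = (-μ) • z := by
        rw [Matrix.sub_mulVec, Matrix.smul_mulVec, Matrix.one_mulVec,
          sub_eq_zero] at hz
        exact hz
      have hμ' : (-μ).re < 0 := hHurwitz (-μ) z hz0 hzeig
      rw [Complex.neg_re] at hμ'
      linarith
  -- generalized eigenvectors span everything
  have hall : ∀ v : Fin n → ℂ, Δ.mulVec v = 0 := by
    set E : Module.End ℂ (Fin n → ℂ) := Matrix.toLinAlgEquiv' A2 with hE
    have htop : ⨆ μ : ℂ, E.maxGenEigenspace μ = ⊤ :=
      Module.End.iSup_maxGenEigenspace_eq_top _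
    have hle : (⊤ : Submodule ℂ (Fin n → ℂ)) ≤ LinearMap.ker Δ.mulVecLin := by
      rw [← htop]
      apply iSup_le
      intro μ x hx
      obtain ⟨k, hk⟩ := (Module.End.mem_maxGenEigenspace _ μ x).mp hx
      have hpow : (E - μ • 1) ^ k = Matrix.toLinAlgEquiv' ((A2 - μ • 1) ^ k) := by
        rw [map_pow, map_sub, _root_.map_smul, _root_.map_one, hE]
      have hmat : ((A2 - μ • 1) ^ k).mulVec x = 0 := by
        rw [← Matrix.toLinAlgEquiv'_apply, ← hpow]
        exact hk
      have : Δ.mulVec x = 0 := claim k μ x hmat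
      simpa [Matrix.mulVecLin] using this
    intro v
    exact hle (Submodule.mem_top)
  have hΔ0 : Δ = 0 := by
    ext i j
    have := congrFun (hall (Pi.single j 1)) i
    simpa [Matrix.mulVec_single] using this
  have hsub : P - P' = 0 := by
    ext i j
    have := congrFun (congrFun hΔ0 i) j
    simp only [hΔ, Matrix.map_apply, Matrix.zero_apply] at this
    exact_mod_cast this
  exact sub_eq_zero.mp hsub
end

section
/- Let τ > 0. Suppose P and P′ are symmetric real n×n matrices that both satisfy the discounted algebraic Riccati equation AᵀP + PA − PBR⁻¹BᵀP + Q = (1/τ)·P, and suppose both closed-loop matrices A − BR⁻¹BᵀP and A − BR⁻¹BᵀP′ are Hurwitz (every complex eigenvalue has negative real part). Then P = P′. In other words, for the discounted LQR problem at most one symmetric solution of the Bellman/HJB equation results in a stable closed-loop system. -/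
open Matrix

/-- For the discounted LQR problem, at most one symmetric solution of the
discounted algebraic Riccati equation `AᵀP + PA − PBR⁻¹BᵀP + Q = (1/τ)·P` yields a Hurwitz
(stable) closed-loop matrix. -/
theorem stabilizing_discounted_care_solution_unique {n m : ℕ}
    (A Q : Matrix (Fin n) (Fin n) ℝ) (B : Matrix (Fin n) (Fin m) ℝ)
    (R : Matrix (Fin m) (Fin m) ℝ) (hRsymm : R.IsSymm) (hR : IsUnit R)
    (τ : ℝ) (hτ : 0 < τ)
    (P P' : Matrix (Fin n) (Fin n) ℝ) (hPsymm : P.IsSymm) (hP'symm : P'.IsSymm)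
    (hP : Aᵀ * P + P * A - P * B * R⁻¹ * Bᵀ * P + Q = (1 / τ) • P)
    (hP' : Aᵀ * P' + P' * A - P' * B * R⁻¹ * Bᵀ * P' + Q = (1 / τ) • P')
    (hHurwitz : ∀ (μ : ℂ) (v : Fin n → ℂ), v ≠ 0 →
      ((A - B * R⁻¹ * Bᵀ * P).map Complex.ofReal).mulVec v = μ • v → μ.re < 0)
    (hHurwitz' : ∀ (μ : ℂ) (v : Fin n → ℂ), v ≠ 0 →
      ((A - B * R⁻¹ * Bᵀ * P').map Complex.ofReal).mulVec v = μ • v → μ.re < 0) :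
    P = P' := by
  -- notation
  set S : Matrix (Fin n) (Fin n) ℝ := B * R⁻¹ * Bᵀ with hS
  have hSsymm : Sᵀ = S := by
    have hRinv : (R⁻¹)ᵀ = R⁻¹ := by
      rw [Matrix.transpose_nonsing_inv, hRsymm.eq]
    simp [hS, Matrix.transpose_mul, Matrix.mul_assoc, hRinv]
  set Δ : Matrix (Fin n) (Fin n) ℝ := P - P' with hΔ
  set F₁ : Matrix (Fin n) (Fin n) ℝ := A - S * P' with hF₁
  set F₂ : Matrix (Fin n) (Fin n) ℝ := A - S * P with hF₂
  -- the real Sylvester-type equation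
  have e1 : Aᵀ * P + P * A - P * S * P = (1 / τ) • P - Q := by
    have : Aᵀ * P + P * A - P * S * P + Q = (1 / τ) • P := by
      have := hP; rwa [show P * B * R⁻¹ * Bᵀ * P = P * S * P by rw [hS]; simp only [Matrix.mul_assoc]] at this
    linear_combination (norm := noncomm_ring) this
  have e2 : Aᵀ * P' + P' * A - P' * S * P' = (1 / τ) • P' - Q := by
    have : Aᵀ * P' + P' * A - P' * S * P' + Q = (1 / τ) • P' := by
      have := hP'; rwa [show P' * B * R⁻¹ * Bᵀ * P' = P' * S * P' by rw [hS]; simp only [Matrix.mul_assoc]] at this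
    linear_combination (norm := noncomm_ring) this
  have hkey : F₁ᵀ * Δ + Δ * F₂ = (1 / τ) • Δ := by
    have htr : F₁ᵀ = Aᵀ - P' * S := by
      rw [hF₁, Matrix.transpose_sub, Matrix.transpose_mul, hSsymm, hP'symm.eq]
    calc F₁ᵀ * Δ + Δ * F₂
        = (Aᵀ * P + P * A - P * S * P) - (Aᵀ * P' + P' * A - P' * S * P') := by
          rw [htr, hΔ, hF₂]; noncomm_ring
      _ = ((1 / τ) • P - Q) - ((1 / τ) • P' - Q) := by rw [e1, e2]
      _ = (1 / τ) • Δ := by rw [hΔ, smul_sub]; abel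
  -- complexify
  set Δc : Matrix (Fin n) (Fin n) ℂ := Δ.map Complex.ofReal with hΔc
  set G : Matrix (Fin n) (Fin n) ℂ := F₁.map Complex.ofReal with hG
  set Nc : Matrix (Fin n) (Fin n) ℂ := F₂.map Complex.ofReal with hNc
  have hkeyC : Gᵀ * Δc + Δc * Nc = ((1 / τ : ℝ) : ℂ) • Δc := by
    ext i j
    have h := congrFun (congrFun hkey i) j
    simp only [Matrix.add_apply, Matrix.mul_apply, Matrix.smul_apply, Matrix.transpose_apply,
      smul_eq_mul] at h ⊢
    simp only [hΔc, hG, hNc, Matrix.map_apply, Matrix.transpose_apply]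
    push_cast
    exact_mod_cast congrArg (Complex.ofReal) h
  -- injectivity of (Gᵀ - (1/τ)•1 + μ•1) for Re μ < 0
  have hMinj : ∀ μ : ℂ, μ.re < 0 → ∀ u : Fin n → ℂ,
      (Gᵀ - ((1 / τ : ℝ) : ℂ) • 1 + μ • 1).mulVec u = 0 → u = 0 := by
    intro μ hμ u hu
    by_contra hne
    have hdet : (Gᵀ - ((1 / τ : ℝ) : ℂ) • 1 + μ • 1).det = 0 := by
      rw [← Matrix.exists_mulVec_eq_zero_iff]
      exact ⟨u, hne, hu⟩
    have hdet' : (G - ((1 / τ : ℝ) : ℂ) • 1 + μ • 1).det = 0 := by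
      rw [← Matrix.det_transpose]
      simpa [Matrix.transpose_sub, Matrix.transpose_add, Matrix.transpose_smul] using hdet
    obtain ⟨w, hw0, hw⟩ := (Matrix.exists_mulVec_eq_zero_iff).2 hdet'
    have hwe : G.mulVec w = (((1 / τ : ℝ) : ℂ) - μ) • w := by
      have := hw
      simp only [Matrix.add_mulVec, Matrix.sub_mulVec, Matrix.smul_mulVec,
        Matrix.one_mulVec] at this
      rw [sub_add_eq_add_sub, sub_eq_zero] at this
      rw [sub_smul]
      exact eq_sub_of_add_eq this
    have := hHurwitz' (((1 / τ : ℝ) : ℂ) - μ) w hw0 hwe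
    have h1τ : (0:ℝ) < 1 / τ := by positivity
    rw [one_div] at h1τ
    simp [Complex.sub_re, Complex.ofReal_re] at this
    linarith
  -- eigenvalues of Nc have negative real part
  have hNeig : ∀ μ : ℂ, Module.End.HasEigenvalue (Matrix.mulVecLin Nc) μ → μ.re < 0 := by
    intro μ hμ
    obtain ⟨v, hv⟩ := hμ.exists_hasEigenvector
    exact hHurwitz μ v hv.2 (by simpa [Matrix.mulVecLin_apply] using hv.apply_eq_smul)
  -- main claim by induction on generalized eigenvector order
  set f : Module.End ℂ (Fin n → ℂ) := Matrix.mulVecLin Nc with hf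
  have claim : ∀ (k : ℕ) (μ : ℂ) (v : Fin n → ℂ), ((f - μ • 1) ^ k) v = 0 →
      Δc.mulVec v = 0 := by
    intro k
    induction k with
    | zero => intro μ v hv; simp at hv; simp [hv]
    | succ k ih =>
      intro μ v hv
      by_cases hv0 : v = 0
      · simp [hv0]
      have hre : μ.re < 0 := by
        apply hNeig
        apply Module.End.hasEigenvalue_of_hasGenEigenvalue (k := k + 1)
        rw [Module.End.hasGenEigenvalue_iff]
        intro hbot
        apply hv0
        have : v ∈ f.genEigenspace μ (k+1 : ℕ) := by
          rw [Module.End.mem_genEigenspace_nat]; exact hv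
        rw [hbot] at this
        simpa using this
      set w : Fin n → ℂ := (f - μ • 1) v with hw
      have hwk : ((f - μ • 1) ^ k) w = 0 := by
        rw [hw, ← Module.End.mul_apply, ← pow_succ]
        exact hv
      have ihw : Δc.mulVec w = 0 := ih μ w hwk
      have hfv : Nc.mulVec v = μ • v + w := by
        rw [hw]
        simp [hf, Matrix.mulVecLin_apply]
      have hstep : (Gᵀ - ((1 / τ : ℝ) : ℂ) • 1 + μ • 1).mulVec (Δc.mulVec v) = 0 := by
        have h1 : (Gᵀ * Δc + Δc * Nc).mulVec v = (((1 / τ : ℝ) : ℂ) • Δc).mulVec v := by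
          rw [hkeyC]
        simp only [Matrix.add_mulVec, ← Matrix.mulVec_mulVec, Matrix.smul_mulVec] at h1
        rw [hfv] at h1
        simp only [Matrix.mulVec_add, Matrix.mulVec_smul] at h1
        rw [ihw, add_zero] at h1
        simp only [Matrix.add_mulVec, Matrix.sub_mulVec, Matrix.smul_mulVec,
          Matrix.one_mulVec]
        have : Gᵀ.mulVec (Δc.mulVec v) = ((1 / τ : ℝ) : ℂ) • Δc.mulVec v - μ • Δc.mulVec v := by
          rw [eq_sub_iff_add_eq]; exact h1
        rw [this]; abel
      exact hMinj μ hre (Δc.mulVec v) hstep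
  -- conclude Δc = 0
  have hDelta : Δc = 0 := by
    have hker : ∀ v : Fin n → ℂ, Δc.mulVec v = 0 := by
      intro v
      have hv : v ∈ (⊤ : Submodule ℂ (Fin n → ℂ)) := Submodule.mem_top
      rw [← Module.End.iSup_maxGenEigenspace_eq_top f] at hv
      refine Submodule.iSup_induction _ (motive := fun x => Δc.mulVec x = 0) hv ?_ (by simp) ?_
      · intro μ x hx
        rw [Module.End.mem_maxGenEigenspace] at hx
        obtain ⟨k, hk⟩ := hx
        exact claim k μ x hk
      · intro x y hx hy
        rw [Matrix.mulVec_add, hx, hy, add_zero]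
    ext i j
    have := congrFun (hker (Pi.single j 1)) i
    simpa [Matrix.mulVec_single] using this
  -- back to ℝ
  have : Δ = 0 := by
    ext i j
    have := congrFun (congrFun hDelta i) j
    simpa [hΔc, Matrix.map_apply] using this
  have := sub_eq_zero.mp this
  exact this
end

section
/- The discrete-time Hamiltonian matrix H_d is symplectic: with J = [[0, I], [−I, 0]] the real 2n×2n block matrix, one has H_dᵀ·J·H_d = J. Consequently H_d is invertible, and if λ ∈ ℂ is an eigenvalue of H_d then λ ≠ 0 and 1/λ is also an eigenvalue of H_d. -/
open Matrix

lemma symplectic_aux {N : Type*} [Fintype N] [DecidableEq N]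
    (H J : Matrix N N ℝ) (hsymp : Hᵀ * J * H = J) (hJ : IsUnit J.det) :
    IsUnit H ∧ ∀ l : ℂ,
      (∃ v : N → ℂ, v ≠ 0 ∧ (H.map Complex.ofReal).mulVec v = l • v) →
      l ≠ 0 ∧ ∃ w : N → ℂ, w ≠ 0 ∧
        (H.map Complex.ofReal).mulVec w = (1 / l) • w := by
  have hdetJ : J.det ≠ 0 := hJ.ne_zero
  have hdet : H.det * J.det * H.det = J.det := by
    have := congrArg Matrix.det hsymp
    simpa [Matrix.det_mul, Matrix.det_transpose] using this
  have hdetH : H.det ≠ 0 := by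
    intro h; rw [h] at hdet; simp at hdet; exact hdetJ hdet.symm
  have hHunit : IsUnit H := by
    rw [Matrix.isUnit_iff_isUnit_det]; exact isUnit_iff_ne_zero.mpr hdetH
  refine ⟨hHunit, ?_⟩
  intro l ⟨v, hv, hvec⟩
  set f := (algebraMap ℝ ℂ)
  set Hc := H.map f with hHc
  set Jc := J.map f with hJc
  have hmap : ∀ M : Matrix N N ℝ, M.map Complex.ofReal = M.map f := fun _ => rfl
  rw [hmap] at hvec
  have hdetHc : Hc.det ≠ 0 := by
    rw [hHc, ← RingHom.mapMatrix_apply, ← RingHom.map_det]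
    simpa using hdetH
  have hdetJc : Jc.det ≠ 0 := by
    rw [hJc, ← RingHom.mapMatrix_apply, ← RingHom.map_det]
    simpa using hdetJ
  have hsympC : Hcᵀ * Jc * Hc = Jc := by
    have := congrArg (Matrix.map · f) hsymp
    simpa [Matrix.map_mul, Matrix.transpose_map] using this
  have hl : l ≠ 0 := by
    intro h
    subst h
    rw [zero_smul] at hvec
    exact hdetHc ((Matrix.exists_mulVec_eq_zero_iff).mp ⟨v, hv, hvec⟩)
  refine ⟨hl, ?_⟩
  -- Hc⁻¹ v = l⁻¹ v
  have hinv : Hc⁻¹.mulVec v = l⁻¹ • v := by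
    have h1 : Hc⁻¹.mulVec (Hc.mulVec v) = v := by
      rw [Matrix.mulVec_mulVec, Matrix.nonsing_inv_mul Hc (isUnit_iff_ne_zero.mpr hdetHc),
        Matrix.one_mulVec]
    rw [hvec, Matrix.mulVec_smul] at h1
    have := congrArg (l⁻¹ • ·) h1
    simpa [smul_smul, inv_mul_cancel₀ hl] using this
  have hkey : Hcᵀ * Jc = Jc * Hc⁻¹ := by
    calc Hcᵀ * Jc = Hcᵀ * Jc * (Hc * Hc⁻¹) := by
          rw [Matrix.mul_nonsing_inv Hc (isUnit_iff_ne_zero.mpr hdetHc), mul_one]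
      _ = (Hcᵀ * Jc * Hc) * Hc⁻¹ := by simp [mul_assoc]
      _ = Jc * Hc⁻¹ := by rw [hsympC]
  have hu : Hcᵀ.mulVec (Jc.mulVec v) = l⁻¹ • Jc.mulVec v := by
    rw [Matrix.mulVec_mulVec, hkey, ← Matrix.mulVec_mulVec, hinv, Matrix.mulVec_smul]
  have hune : Jc.mulVec v ≠ 0 := by
    intro h
    exact hdetJc ((Matrix.exists_mulVec_eq_zero_iff).mp ⟨v, hv, h⟩)
  -- so det (Hcᵀ - l⁻¹ • 1) = 0
  have hdet0 : (Hcᵀ - l⁻¹ • 1).det = 0 := by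
    apply (Matrix.exists_mulVec_eq_zero_iff).mp
    refine ⟨Jc.mulVec v, hune, ?_⟩
    rw [Matrix.sub_mulVec, hu, Matrix.smul_mulVec, Matrix.one_mulVec, sub_self]
  have hdet0' : (Hc - l⁻¹ • 1).det = 0 := by
    rw [← Matrix.det_transpose]
    simpa [Matrix.transpose_sub, Matrix.transpose_smul] using hdet0
  obtain ⟨w, hw, hweq⟩ := (Matrix.exists_mulVec_eq_zero_iff).mpr hdet0'
  refine ⟨w, hw, ?_⟩
  rw [Matrix.sub_mulVec, Matrix.smul_mulVec, Matrix.one_mulVec, sub_eq_zero] at hweq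
  rw [hmap, hweq, one_div]

/-- The discrete-time Hamiltonian matrix `H_d` is symplectic:
`H_dᵀ·J·H_d = J` with `J = [[0, I], [−I, 0]]`. Consequently `H_d` is invertible, and if
`λ ∈ ℂ` is an eigenvalue of `H_d`, then `λ ≠ 0` and `1/λ` is also an eigenvalue of `H_d`. -/
theorem discrete_hamiltonian_symplectic {n m : ℕ}
    (A Q : Matrix (Fin n) (Fin n) ℝ) (hA : IsUnit A) (hQ : Q.IsSymm)
    (B : Matrix (Fin n) (Fin m) ℝ)
    (R : Matrix (Fin m) (Fin m) ℝ) (hRsymm : R.IsSymm) (hR : IsUnit R) :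
    (Matrix.fromBlocks (A + B * R⁻¹ * Bᵀ * (Aᵀ)⁻¹ * Q) (-(B * R⁻¹ * Bᵀ * (Aᵀ)⁻¹))
          (-((Aᵀ)⁻¹ * Q)) ((Aᵀ)⁻¹))ᵀ *
        Matrix.fromBlocks 0 1 (-1) 0 *
        Matrix.fromBlocks (A + B * R⁻¹ * Bᵀ * (Aᵀ)⁻¹ * Q) (-(B * R⁻¹ * Bᵀ * (Aᵀ)⁻¹))
          (-((Aᵀ)⁻¹ * Q)) ((Aᵀ)⁻¹) =
      Matrix.fromBlocks 0 1 (-1) 0 ∧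
    IsUnit (Matrix.fromBlocks (A + B * R⁻¹ * Bᵀ * (Aᵀ)⁻¹ * Q) (-(B * R⁻¹ * Bᵀ * (Aᵀ)⁻¹))
          (-((Aᵀ)⁻¹ * Q)) ((Aᵀ)⁻¹)) ∧
    ∀ l : ℂ,
      (∃ v : Fin n ⊕ Fin n → ℂ, v ≠ 0 ∧
        ((Matrix.fromBlocks (A + B * R⁻¹ * Bᵀ * (Aᵀ)⁻¹ * Q) (-(B * R⁻¹ * Bᵀ * (Aᵀ)⁻¹))
            (-((Aᵀ)⁻¹ * Q)) ((Aᵀ)⁻¹)).map Complex.ofReal).mulVec v = l • v) →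
      l ≠ 0 ∧
        ∃ w : Fin n ⊕ Fin n → ℂ, w ≠ 0 ∧
          ((Matrix.fromBlocks (A + B * R⁻¹ * Bᵀ * (Aᵀ)⁻¹ * Q) (-(B * R⁻¹ * Bᵀ * (Aᵀ)⁻¹))
              (-((Aᵀ)⁻¹ * Q)) ((Aᵀ)⁻¹)).map Complex.ofReal).mulVec w = (1 / l) • w := by
  have hAd : IsUnit A.det := (Matrix.isUnit_iff_isUnit_det A).mp hA
  have hATd : IsUnit Aᵀ.det := Matrix.isUnit_det_transpose A hAd
  have h1 : Aᵀ * (Aᵀ)⁻¹ = 1 := Matrix.mul_nonsing_inv _ hATd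
  have h2 : A⁻¹ * A = 1 := Matrix.nonsing_inv_mul _ hAd
  have h1' : ∀ X : Matrix (Fin n) (Fin n) ℝ, Aᵀ * ((Aᵀ)⁻¹ * X) = X := by
    intro X; rw [← mul_assoc, h1, one_mul]
  have h2' : ∀ X : Matrix (Fin n) (Fin n) ℝ, A⁻¹ * (A * X) = X := by
    intro X; rw [← mul_assoc, h2, one_mul]
  have hGT : ((Aᵀ)⁻¹)ᵀ = A⁻¹ := by
    rw [← Matrix.transpose_nonsing_inv, Matrix.transpose_transpose]
  have hRT : (R⁻¹)ᵀ = R⁻¹ := by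
    rw [Matrix.transpose_nonsing_inv, hRsymm.eq]
  have hST : (B * R⁻¹ * Bᵀ)ᵀ = B * R⁻¹ * Bᵀ := by
    rw [Matrix.transpose_mul, Matrix.transpose_mul, Matrix.transpose_transpose, hRT,
      ← Matrix.mul_assoc]
  have hsymp : (Matrix.fromBlocks (A + B * R⁻¹ * Bᵀ * (Aᵀ)⁻¹ * Q) (-(B * R⁻¹ * Bᵀ * (Aᵀ)⁻¹))
          (-((Aᵀ)⁻¹ * Q)) ((Aᵀ)⁻¹))ᵀ *
        Matrix.fromBlocks 0 1 (-1) 0 *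
        Matrix.fromBlocks (A + B * R⁻¹ * Bᵀ * (Aᵀ)⁻¹ * Q) (-(B * R⁻¹ * Bᵀ * (Aᵀ)⁻¹))
          (-((Aᵀ)⁻¹ * Q)) ((Aᵀ)⁻¹) =
      Matrix.fromBlocks 0 1 (-1) 0 := by
    rw [Matrix.fromBlocks_transpose, Matrix.fromBlocks_multiply, Matrix.fromBlocks_multiply]
    simp only [Matrix.transpose_add, Matrix.transpose_mul, Matrix.transpose_neg, hGT, hST,
      hQ.eq, Matrix.zero_mul, Matrix.mul_zero, zero_add, add_zero, Matrix.one_mul,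
      Matrix.mul_one, Matrix.neg_mul, Matrix.mul_neg, neg_neg,
      mul_add, add_mul, mul_assoc, h1', h2', h1, h2, mul_one, one_mul]
    rw [Matrix.fromBlocks_inj]
    refine ⟨by abel, ?_, by simp, by abel⟩
    abel
  have hJ : IsUnit ((Matrix.fromBlocks 0 1 (-1) 0 :
      Matrix (Fin n ⊕ Fin n) (Fin n ⊕ Fin n) ℝ)).det := by
    have hright : (Matrix.fromBlocks 0 1 (-1) 0 : Matrix (Fin n ⊕ Fin n) (Fin n ⊕ Fin n) ℝ) *
        Matrix.fromBlocks 0 (-1) 1 0 = 1 := by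
      simp [Matrix.fromBlocks_multiply, ← Matrix.fromBlocks_one]
    exact Matrix.isUnit_det_of_right_inverse hright
  obtain ⟨hunit, heig⟩ := symplectic_aux _ _ hsymp hJ
  exact ⟨hsymp, hunit, heig⟩
end

section
/- If the pair (A,B) is controllable in the PBH sense and the pair (Q,A) is observable in the PBH sense, then—counting algebraic multiplicity, i.e. in the multiset of complex roots of the characteristic polynomial of H_d—the discrete-time Hamiltonian matrix H_d has exactly n eigenvalues λ with |λ| < 1 and exactly n eigenvalues λ with |λ| > 1. -/
open Matrix Polynomial

variable {ι : Type*} [Fintype ι] [DecidableEq ι]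

lemma my_eval_charpoly {K : Type*} [Field K] (M : Matrix ι ι K) (z : K) :
    M.charpoly.eval z = (z • (1 : Matrix ι ι K) - M).det := by
  rw [Matrix.charpoly, ← coe_evalRingHom, RingHom.map_det]
  congr 1
  ext i j
  by_cases h : i = j <;>
    simp [h, charmatrix_apply, Matrix.one_apply, Matrix.diagonal_apply]

lemma my_charpoly_transpose {K : Type*} [CommRing K] (M : Matrix ι ι K) :
    (Mᵀ).charpoly = M.charpoly := by
  rw [Matrix.charpoly, Matrix.charpoly, ← Matrix.det_transpose (charmatrix Mᵀ)]
  congr 1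
  ext i j
  by_cases h : i = j <;>
    simp [h, charmatrix_apply, Matrix.diagonal_apply, Ne.symm]

lemma my_charpoly_conj {K : Type*} [Field K] (P M : Matrix ι ι K) (hP : IsUnit P.det) :
    (P * M * P⁻¹).charpoly = M.charpoly := by
  have hPP : P * P⁻¹ = 1 := Matrix.mul_nonsing_inv P hP
  have key : charmatrix (P * M * P⁻¹) =
      P.map C * charmatrix M * P⁻¹.map C := by
    rw [charmatrix]
    have hmap : (C : K →+* K[X]).mapMatrix (P * M * P⁻¹)
        = P.map C * M.map C * P⁻¹.map C := by
      simp [RingHom.mapMatrix_apply, Matrix.map_mul]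
    rw [hmap, charmatrix]
    have hscalar : Matrix.scalar ι (X : K[X]) = (X : K[X]) • 1 := by
      rw [Matrix.smul_one_eq_diagonal]; rfl
    have h1 : (P.map C : Matrix ι ι K[X]) * P⁻¹.map C = 1 := by
      rw [← Matrix.map_mul, hPP, Matrix.map_one _ (map_zero C) (map_one C)]
    rw [mul_sub, sub_mul, hscalar, mul_smul_comm, smul_mul_assoc, mul_one, h1]
    rfl
  rw [Matrix.charpoly, Matrix.charpoly, key, Matrix.det_mul, Matrix.det_mul]
  have h1 : (P.map C : Matrix ι ι K[X]).det * (P⁻¹.map C).det = 1 := by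
    rw [← Matrix.det_mul, ← Matrix.map_mul, hPP, Matrix.map_one _ (map_zero C) (map_one C),
      Matrix.det_one]
  calc (P.map C).det * (charmatrix M).det * (P⁻¹.map C).det
      = (P.map C).det * (P⁻¹.map C).det * (charmatrix M).det := by ring
    _ = (charmatrix M).det := by rw [h1, one_mul]
variable {ι : Type*} [Fintype ι] [DecidableEq ι]

lemma my_roots_charpoly_inv (M : Matrix ι ι ℂ) (hM : IsUnit M.det) :
    (M⁻¹).charpoly.roots = M.charpoly.roots.map (·⁻¹) := by
  set r := M.charpoly.roots with hr
  have hmonic := M.charpoly_monic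
  have hsplits : M.charpoly.Splits := IsAlgClosed.splits _
  have hcard : Multiset.card r = Fintype.card ι := by
    rw [hr, splits_iff_card_roots.mp hsplits, Matrix.charpoly_natDegree_eq_dim]
  have hprod : r.prod = M.det := (Matrix.det_eq_prod_roots_charpoly M).symm
  have h0 : ∀ s ∈ r, s ≠ 0 := by
    intro s hs h
    exact hM.ne_zero (by rw [← hprod]; exact Multiset.prod_eq_zero (h ▸ hs))
  have hq : ((r.map (·⁻¹)).map fun a => X - C a).prod.roots = r.map (·⁻¹) :=
    roots_multiset_prod_X_sub_C _
  rw [← hq]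
  congr 1
  apply Polynomial.eq_of_infinite_eval_eq
  apply Set.Infinite.mono (s := ({0}ᶜ : Set ℂ))
  swap
  · exact Set.Finite.infinite_compl (Set.finite_singleton 0)
  intro z hz
  have hz : z ≠ 0 := hz
  have e1 : eval z (M⁻¹).charpoly = M⁻¹.det * ((-z) ^ Fintype.card ι *
      (r.map fun s => z⁻¹ - s).prod) := by
    rw [my_eval_charpoly]
    have key : z • (1 : Matrix ι ι ℂ) - M⁻¹ = M⁻¹ * ((-z) • (z⁻¹ • 1 - M)) := by
      rw [smul_sub, smul_smul, neg_mul, mul_inv_cancel₀ hz, neg_smul, one_smul,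
        mul_sub, Matrix.mul_smul, Matrix.nonsing_inv_mul M hM]
      simp [sub_eq_add_neg, Matrix.mul_smul]
      abel
    rw [key, Matrix.det_mul, Matrix.det_smul]
    congr 2
    rw [← my_eval_charpoly]
    conv_lhs => rw [hsplits.eq_prod_roots_of_monic hmonic]
    rw [eval_multiset_prod, Multiset.map_map]
    congr 1
    apply Multiset.map_congr rfl
    intro s _
    simp
  have e2 : eval z ((r.map (·⁻¹)).map fun a => X - C a).prod
      = (r.map fun s => z - s⁻¹).prod := by
    rw [eval_multiset_prod, Multiset.map_map, Multiset.map_map]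
    apply congrArg
    apply Multiset.map_congr rfl
    intro s _
    simp
  show eval z _ = eval z _
  rw [e1, e2]
  have e3 : ((-z) ^ Fintype.card ι) = (r.map fun _ => -z).prod := by
    rw [Multiset.map_const', Multiset.prod_replicate, hcard]
  rw [e3, ← Multiset.prod_map_mul]
  have e4 : (r.map fun s => -z * (z⁻¹ - s)).prod
      = (r.map fun s => s * (z - s⁻¹)).prod := by
    apply congrArg
    apply Multiset.map_congr rfl
    intro s hs
    rw [mul_sub, mul_sub, neg_mul, mul_inv_cancel₀ hz, mul_inv_cancel₀ (h0 s hs)]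
    ring
  rw [e4, Multiset.prod_map_mul, Multiset.map_id', hprod, Matrix.det_nonsing_inv, ← mul_assoc,
    Ring.inverse_mul_cancel _ hM, one_mul]
open Matrix Polynomial

lemma my_map_mul {a b c : Type*} [Fintype b] (M : Matrix a b ℝ) (N : Matrix b c ℝ) :
    (M * N).map Complex.ofReal = M.map Complex.ofReal * N.map Complex.ofReal := by
  ext i j
  simp [Matrix.mul_apply, Matrix.map_apply]

lemma my_map_add {a b : Type*} (M N : Matrix a b ℝ) :
    (M + N).map Complex.ofReal = M.map Complex.ofReal + N.map Complex.ofReal := by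
  ext i j; simp [Matrix.map_apply]

lemma my_map_neg {a b : Type*} (M : Matrix a b ℝ) :
    (-M).map Complex.ofReal = -(M.map Complex.ofReal) := by
  ext i j; simp [Matrix.map_apply]

lemma my_map_one {a : Type*} [DecidableEq a] :
    (1 : Matrix a a ℝ).map Complex.ofReal = 1 := by
  ext i j
  by_cases h : i = j <;> simp [h, Matrix.one_apply, Matrix.map_apply]

lemma my_map_conjTranspose {ι κ : Type*} (M : Matrix ι κ ℝ) :
    (M.map Complex.ofReal)ᴴ = Mᵀ.map Complex.ofReal := by
  ext i j
  simp [conjTranspose_apply, Complex.conj_ofReal]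

lemma my_real_symm {ι : Type*} {Q : Matrix ι ι ℝ} (hQ : Q.IsHermitian) : Qᵀ = Q := by
  ext i j
  have h := congr_fun (congr_fun hQ i) j
  simpa [conjTranspose_apply] using h

lemma my_psd_dot {ι : Type*} [Fintype ι] [DecidableEq ι]
    (Q : Matrix ι ι ℝ) (hQ : Q.PosSemidef) (x : ι → ℂ) :
    ∃ a : ℝ, 0 ≤ a ∧ star x ⬝ᵥ ((Q.map Complex.ofReal) *ᵥ x) = (a : ℂ) ∧
      (a = 0 → (Q.map Complex.ofReal) *ᵥ x = 0) := by
  obtain ⟨Cm, hC⟩ : ∃ Cm : Matrix ι ι ℝ, Q = Cmᵀ * Cm := by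
    open scoped MatrixOrder in
    obtain ⟨B, hB⟩ := CStarAlgebra.nonneg_iff_eq_star_mul_self.mp hQ.nonneg
    exact ⟨B, by rw [hB, star_eq_conjTranspose, conjTranspose_eq_transpose_of_trivial]⟩
  set C' : Matrix ι ι ℂ := Cm.map Complex.ofReal with hC'
  have hQmap : Q.map Complex.ofReal = C'ᴴ * C' := by
    rw [my_map_conjTranspose, hC]
    ext i j
    simp [Matrix.mul_apply, conjTranspose_apply, hC', Matrix.map_apply]
  set u : ι → ℂ := C' *ᵥ x with hu
  have hdot : star x ⬝ᵥ ((Q.map Complex.ofReal) *ᵥ x) = star u ⬝ᵥ u := by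
    rw [hQmap, ← Matrix.mulVec_mulVec, Matrix.dotProduct_mulVec, ← Matrix.star_mulVec]
  refine ⟨∑ i, Complex.normSq (u i), Finset.sum_nonneg fun i _ => Complex.normSq_nonneg _, ?_, ?_⟩
  · rw [hdot]
    push_cast
    simp [dotProduct, Complex.normSq_eq_conj_mul_self, Pi.star_apply]
  · intro ha
    have hu0 : u = 0 := by
      funext i
      have h1 : Complex.normSq (u i) = 0 :=
        (Finset.sum_eq_zero_iff_of_nonneg
          (fun i _ => Complex.normSq_nonneg (u i))).mp ha i (Finset.mem_univ i)
      simpa using Complex.normSq_eq_zero.mp h1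
    rw [hQmap, ← Matrix.mulVec_mulVec, ← hu, hu0, Matrix.mulVec_zero]

lemma my_no_unit_circle {n m : ℕ}
    (A Q : Matrix (Fin n) (Fin n) ℝ) (hA : IsUnit A) (hQ : Q.PosSemidef)
    (B : Matrix (Fin n) (Fin m) ℝ)
    (R : Matrix (Fin m) (Fin m) ℝ) (hR : R.PosDef)
    (hctrb : ∀ (l : ℂ) (y : Fin n → ℂ), y ≠ 0 →
      (A.map Complex.ofReal)ᵀ.mulVec y = l • y → (B.map Complex.ofReal)ᵀ.mulVec y ≠ 0)
    (hobs : ∀ (l : ℂ) (x : Fin n → ℂ), x ≠ 0 →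
      (A.map Complex.ofReal).mulVec x = l • x → (Q.map Complex.ofReal).mulVec x ≠ 0)
    (z : ℂ) (habs : ‖z‖ = 1) (v : (Fin n ⊕ Fin n) → ℂ) (hv : v ≠ 0)
    (hev : ((Matrix.fromBlocks (A + B * R⁻¹ * Bᵀ * (Aᵀ)⁻¹ * Q) (-(B * R⁻¹ * Bᵀ * (Aᵀ)⁻¹))
            (-((Aᵀ)⁻¹ * Q)) ((Aᵀ)⁻¹)).map Complex.ofReal) *ᵥ v = z • v) : False := by
  have hz0 : z ≠ 0 := by
    intro h; rw [h] at habs; simp at habs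
  set A' := A.map Complex.ofReal with hA'
  set Q' := Q.map Complex.ofReal with hQ'
  set B' := B.map Complex.ofReal with hB'
  set G' := ((Aᵀ)⁻¹).map Complex.ofReal with hG'
  set Ri' := (R⁻¹).map Complex.ofReal with hRi'
  set S' := B' * Ri' * B'ᵀ with hS'
  -- block structure
  have hblocks : ((Matrix.fromBlocks (A + B * R⁻¹ * Bᵀ * (Aᵀ)⁻¹ * Q) (-(B * R⁻¹ * Bᵀ * (Aᵀ)⁻¹))
            (-((Aᵀ)⁻¹ * Q)) ((Aᵀ)⁻¹)).map Complex.ofReal)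
      = fromBlocks (A' + S' * G' * Q') (-(S' * G')) (-(G' * Q')) G' := by
    rw [Matrix.fromBlocks_map]
    congr 1 <;>
      simp [my_map_add, my_map_mul, my_map_neg, Matrix.transpose_map, hS', hA', hQ', hB', hG',
        hRi']
  rw [hblocks] at hev
  set x : Fin n → ℂ := v ∘ Sum.inl with hx
  set y : Fin n → ℂ := v ∘ Sum.inr with hy
  have hv' : v = Sum.elim x y := funext fun i => by cases i <;> rfl
  rw [hv', Matrix.fromBlocks_mulVec] at hev
  have hE1 : (A' + S' * G' * Q') *ᵥ x + (-(S' * G')) *ᵥ y = z • x := by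
    funext i
    have h := congrFun hev (Sum.inl i)
    simpa using h
  have hE2 : (-(G' * Q')) *ᵥ x + G' *ᵥ y = z • y := by
    funext i
    have h := congrFun hev (Sum.inr i)
    simpa using h
  -- basic unit facts
  have hAd : IsUnit A.det := (Matrix.isUnit_iff_isUnit_det A).mp hA
  have hATd : IsUnit Aᵀ.det := by rwa [Matrix.det_transpose]
  have hATG : (Aᵀ.map Complex.ofReal) * G' = 1 := by
    rw [hG', ← my_map_mul, Matrix.mul_nonsing_inv _ hATd, my_map_one]
  have hATmap : Aᵀ.map Complex.ofReal = A'ᵀ := by rw [hA', Matrix.transpose_map]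
  -- dagger
  have h2 : G' *ᵥ (y - Q' *ᵥ x) = z • y := by
    rw [Matrix.mulVec_sub, ← hE2, Matrix.neg_mulVec, ← Matrix.mulVec_mulVec]
    abel
  have hdag : y - Q' *ᵥ x = z • ((Aᵀ.map Complex.ofReal) *ᵥ y) := by
    have h3 := congrArg (fun w => (Aᵀ.map Complex.ofReal) *ᵥ w) h2
    simpa only [Matrix.mulVec_mulVec, hATG, Matrix.one_mulVec, Matrix.mulVec_smul] using h3
  -- ddagger
  have h5 : G' *ᵥ (Q' *ᵥ x) - G' *ᵥ y = -(z • y) := by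
    rw [← Matrix.mulVec_sub, show Q' *ᵥ x - y = -(y - Q' *ᵥ x) by abel, Matrix.mulVec_neg, h2]
  have hddag : A' *ᵥ x = z • x + z • (S' *ᵥ y) := by
    have e := hE1
    rw [Matrix.add_mulVec, Matrix.neg_mulVec] at e
    rw [← Matrix.mulVec_mulVec (v := x) (M := S' * G') (N := Q'), ←
      Matrix.mulVec_mulVec (v := Q' *ᵥ x) (M := S') (N := G'), ←
      Matrix.mulVec_mulVec (v := y) (M := S') (N := G')] at e
    have e2 : A' *ᵥ x + S' *ᵥ (G' *ᵥ (Q' *ᵥ x) - G' *ᵥ y) = z • x := by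
      rw [Matrix.mulVec_sub]
      rw [← e]
      abel
    rw [h5, Matrix.mulVec_neg, Matrix.mulVec_smul] at e2
    have := e2
    rw [← sub_eq_iff_eq_add'] at *
    · rw [← this]
      abel
  -- inner products
  obtain ⟨a, ha0, haeq, hazero⟩ := my_psd_dot Q hQ x
  set w : Fin m → ℂ := B'ᵀ *ᵥ y with hw
  have hstarw : star y ᵥ* B' = star w := by
    rw [hw, Matrix.star_mulVec]
    congr 1
    rw [hB', ← Matrix.transpose_map, my_map_conjTranspose, transpose_transpose]
  have hbeta : star y ⬝ᵥ (S' *ᵥ y) = star w ⬝ᵥ (Ri' *ᵥ w) := by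
    rw [hS', ← Matrix.mulVec_mulVec, ← Matrix.mulVec_mulVec, Matrix.dotProduct_mulVec, hstarw,
      ← hw]
  obtain ⟨b, hb0, hbeq, hbzero⟩ := my_psd_dot (R⁻¹) hR.inv.posSemidef w
  rw [← hRi'] at hbeq hbzero
  -- conj z facts
  have hzz : star z * z = 1 := by
    rw [Complex.star_def, mul_comm, Complex.mul_conj, Complex.normSq_eq_norm_sq, habs]
    norm_num
  have hconjinv : star z⁻¹ = z := by
    rw [star_inv₀]
    exact inv_eq_of_mul_eq_one_right hzz
  -- A^T y = z⁻¹ y - ...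
  have hATy : (Aᵀ.map Complex.ofReal) *ᵥ y = z⁻¹ • (y - Q' *ᵥ x) := by
    rw [hdag, smul_smul, inv_mul_cancel₀ hz0, one_smul]
  -- two computations of star y ⬝ᵥ A' x
  have hQ'H : Q'ᴴ = Q' := by
    rw [hQ', my_map_conjTranspose, my_real_symm hQ.1]
  have hqsym : star (Q' *ᵥ x) ⬝ᵥ x = star x ⬝ᵥ (Q' *ᵥ x) := by
    rw [Matrix.star_mulVec, hQ'H, ← Matrix.dotProduct_mulVec]
  have hc2 : star y ⬝ᵥ (A' *ᵥ x)
      = z * (star y ⬝ᵥ x) - z * (star x ⬝ᵥ (Q' *ᵥ x)) := by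
    rw [Matrix.dotProduct_mulVec, show star y ᵥ* A' = star ((Aᵀ.map Complex.ofReal) *ᵥ y) by
      rw [Matrix.star_mulVec, my_map_conjTranspose, transpose_transpose, ← hA']]
    rw [hATy, star_smul, star_sub, hconjinv]
    rw [smul_dotProduct, sub_dotProduct, hqsym]
    simp [mul_sub, smul_eq_mul]
  have hc1 : star y ⬝ᵥ (A' *ᵥ x)
      = z * (star y ⬝ᵥ x) + z * (star y ⬝ᵥ (S' *ᵥ y)) := by
    rw [hddag, dotProduct_add]
    simp [dotProduct_smul, smul_eq_mul]
  -- combine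
  have hab : (a : ℂ) + (b : ℂ) = 0 := by
    have h6 : z * (star x ⬝ᵥ (Q' *ᵥ x)) + z * (star y ⬝ᵥ (S' *ᵥ y)) = 0 := by
      have := hc1.symm.trans hc2
      linear_combination this
    rw [haeq, hbeta, hbeq] at h6
    have h7 : z * ((a : ℂ) + (b : ℂ)) = 0 := by linear_combination h6
    rcases mul_eq_zero.mp h7 with h | h
    · exact absurd h hz0
    · exact h
  have hab' : a + b = 0 := by exact_mod_cast hab
  have ha : a = 0 := by linarith
  have hb : b = 0 := by linarith
  have hQx : Q' *ᵥ x = 0 := hazero ha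
  have hRiw : Ri' *ᵥ w = 0 := hbzero hb
  have hw0 : w = 0 := by
    have hRd : IsUnit R.det := hR.det_pos.ne'.isUnit
    have h8 := congrArg (fun u => (R.map Complex.ofReal) *ᵥ u) hRiw
    simpa only [Matrix.mulVec_mulVec, hRi', ← my_map_mul, Matrix.mul_nonsing_inv _ hRd,
      my_map_one, Matrix.one_mulVec, Matrix.mulVec_zero] using h8
  have hSy : S' *ᵥ y = 0 := by
    rw [hS', ← Matrix.mulVec_mulVec, ← Matrix.mulVec_mulVec, ← hw, hw0]
    simp
  -- final case analysis
  by_cases hxz : x = 0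
  · have hy0 : y ≠ 0 := by
      intro hy0
      apply hv
      rw [hv', hxz, hy0]
      ext (i | i) <;> rfl
    have hAy : (A.map Complex.ofReal)ᵀ.mulVec y = z⁻¹ • y := by
      rw [← hA', ← hATmap, hATy, hQx]
      simp
    have := hctrb z⁻¹ y hy0 hAy
    apply this
    rw [← hA'] at *
    rw [show (B.map Complex.ofReal)ᵀ = B'ᵀ by rw [hB']]
    rw [← hw, hw0]
  · have hAx : (A.map Complex.ofReal).mulVec x = z • x := by
      rw [← hA', hddag, hSy]
      simp
    exact hobs z x hxz hAx (hQx)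
open Matrix Polynomial

variable {n : ℕ}

lemma my_symplectic (A Q S : Matrix (Fin n) (Fin n) ℝ) (hA : IsUnit A)
    (hQs : Qᵀ = Q) (hSs : Sᵀ = S) :
    fromBlocks (A + S * (Aᵀ)⁻¹ * Q) (-(S * (Aᵀ)⁻¹)) (-((Aᵀ)⁻¹ * Q)) ((Aᵀ)⁻¹) *
        fromBlocks (0 : Matrix (Fin n) (Fin n) ℝ) 1 (-1) 0 *
        (fromBlocks (A + S * (Aᵀ)⁻¹ * Q) (-(S * (Aᵀ)⁻¹)) (-((Aᵀ)⁻¹ * Q)) ((Aᵀ)⁻¹))ᵀ =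
      fromBlocks 0 1 (-1) 0 := by
  have hAd : IsUnit A.det := (Matrix.isUnit_iff_isUnit_det A).mp hA
  have hATd : IsUnit Aᵀ.det := by rwa [Matrix.det_transpose]
  set G := (Aᵀ)⁻¹ with hG
  have hGA : G * Aᵀ = 1 := Matrix.nonsing_inv_mul _ hATd
  have hGT : Gᵀ = A⁻¹ := by rw [hG, ← Matrix.transpose_nonsing_inv, Matrix.transpose_transpose]
  have hAE : A * A⁻¹ = 1 := Matrix.mul_nonsing_inv _ hAd
  rw [fromBlocks_transpose, fromBlocks_multiply, fromBlocks_multiply]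
  rw [fromBlocks_inj]
  have hT1 : (A + S * G * Q)ᵀ = Aᵀ + Q * A⁻¹ * S := by
    rw [transpose_add, transpose_mul, transpose_mul, hQs, hSs, hGT, mul_assoc]
  have hT2 : (-(S * G))ᵀ = -(A⁻¹ * S) := by
    rw [transpose_neg, transpose_mul, hSs, hGT]
  have hT3 : (-(G * Q))ᵀ = -(Q * A⁻¹) := by
    rw [transpose_neg, transpose_mul, hQs, hGT]
  refine ⟨?_, ?_, ?_, ?_⟩
  · rw [hT1, hT2]
    simp only [Matrix.mul_zero, Matrix.mul_neg, Matrix.neg_mul, Matrix.mul_one,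
      mul_add, add_mul, neg_neg, Matrix.zero_mul, zero_add, add_zero]
    rw [mul_assoc S G Aᵀ, hGA, mul_one, ← mul_assoc A A⁻¹ S, hAE, one_mul]
    noncomm_ring
  · rw [hT3]
    simp only [Matrix.mul_zero, Matrix.mul_neg, Matrix.neg_mul, Matrix.mul_one,
      mul_add, add_mul, neg_neg, Matrix.zero_mul, zero_add, add_zero]
    rw [hGT, hAE]
    noncomm_ring
  · rw [hT1, hT2]
    simp only [Matrix.mul_zero, Matrix.mul_neg, Matrix.neg_mul, Matrix.mul_one,
      mul_add, add_mul, neg_neg, Matrix.zero_mul, zero_add, add_zero]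
    rw [hGA]
    noncomm_ring
  · rw [hT3, hGT]
    simp only [Matrix.mul_zero, Matrix.mul_neg, Matrix.neg_mul, Matrix.mul_one,
      mul_add, add_mul, neg_neg, Matrix.zero_mul, zero_add, add_zero]
    noncomm_ring
open Matrix Polynomial

/-- Under PBH controllability of `(A,B)` and PBH observability of
`(Q,A)`, counting algebraic multiplicity (roots of the characteristic polynomial), the
discrete-time Hamiltonian matrix `H_d` has exactly `n` eigenvalues inside the unit circle
and exactly `n` eigenvalues outside the unit circle. -/
theorem discrete_hamiltonian_eigenvalue_count {n m : ℕ}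
    (A Q : Matrix (Fin n) (Fin n) ℝ) (hA : IsUnit A) (hQ : Q.PosSemidef)
    (B : Matrix (Fin n) (Fin m) ℝ)
    (R : Matrix (Fin m) (Fin m) ℝ) (hR : R.PosDef)
    (hctrb : ∀ (l : ℂ) (y : Fin n → ℂ), y ≠ 0 →
      (A.map Complex.ofReal)ᵀ.mulVec y = l • y → (B.map Complex.ofReal)ᵀ.mulVec y ≠ 0)
    (hobs : ∀ (l : ℂ) (x : Fin n → ℂ), x ≠ 0 →
      (A.map Complex.ofReal).mulVec x = l • x → (Q.map Complex.ofReal).mulVec x ≠ 0) :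
    Multiset.card
        ((((Matrix.fromBlocks (A + B * R⁻¹ * Bᵀ * (Aᵀ)⁻¹ * Q) (-(B * R⁻¹ * Bᵀ * (Aᵀ)⁻¹))
            (-((Aᵀ)⁻¹ * Q)) ((Aᵀ)⁻¹)).map Complex.ofReal).charpoly.roots).filter
          fun z => ‖z‖ < 1) = n ∧
    Multiset.card
        ((((Matrix.fromBlocks (A + B * R⁻¹ * Bᵀ * (Aᵀ)⁻¹ * Q) (-(B * R⁻¹ * Bᵀ * (Aᵀ)⁻¹))
            (-((Aᵀ)⁻¹ * Q)) ((Aᵀ)⁻¹)).map Complex.ofReal).charpoly.roots).filter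
          fun z => 1 < ‖z‖) = n := by
  classical
  -- real matrices
  set S : Matrix (Fin n) (Fin n) ℝ := B * R⁻¹ * Bᵀ with hSdef
  have hQs : Qᵀ = Q := my_real_symm hQ.1
  have hRinvPD : (R⁻¹).PosDef := hR.inv
  have hRis : (R⁻¹)ᵀ = R⁻¹ := my_real_symm hRinvPD.1
  have hSs : Sᵀ = S := by
    rw [hSdef, transpose_mul, transpose_mul, transpose_transpose, hRis]
    exact (Matrix.mul_assoc B R⁻¹ Bᵀ).symm
  set Hd : Matrix (Fin n ⊕ Fin n) (Fin n ⊕ Fin n) ℝ :=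
    fromBlocks (A + S * (Aᵀ)⁻¹ * Q) (-(S * (Aᵀ)⁻¹)) (-((Aᵀ)⁻¹ * Q)) ((Aᵀ)⁻¹) with hHd
  set J : Matrix (Fin n ⊕ Fin n) (Fin n ⊕ Fin n) ℝ := fromBlocks 0 1 (-1) 0 with hJ
  have hsymp : Hd * J * Hdᵀ = J := my_symplectic A Q S hA hQs hSs
  -- complexification
  set Mc : Matrix (Fin n ⊕ Fin n) (Fin n ⊕ Fin n) ℂ := Hd.map Complex.ofReal with hMc
  set Jc : Matrix (Fin n ⊕ Fin n) (Fin n ⊕ Fin n) ℂ := J.map Complex.ofReal with hJc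
  have hsympc : Mc * Jc * Mcᵀ = Jc := by
    have h := congrArg (fun (X : Matrix (Fin n ⊕ Fin n) (Fin n ⊕ Fin n) ℝ) =>
      X.map Complex.ofReal) hsymp
    simpa only [my_map_mul, Matrix.transpose_map, hMc, hJc] using h
  have hJcinv : Jc * (-Jc) = 1 := by
    rw [hJc, ← my_map_neg, ← my_map_mul, hJ]
    rw [Matrix.fromBlocks_neg, Matrix.fromBlocks_multiply]
    simp [← Matrix.fromBlocks_one, ← my_map_one]
  have hJcdet : IsUnit Jc.det := Matrix.isUnit_det_of_right_inverse hJcinv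
  have hMcdet : IsUnit Mc.det := by
    have h1 : Mc.det * Jc.det * Mc.det = Jc.det := by
      have h := congrArg Matrix.det hsympc
      rwa [Matrix.det_mul, Matrix.det_mul, Matrix.det_transpose] at h
    have h2 : Mc.det * Mc.det = 1 := by
      have h3 : (Mc.det * Mc.det) * Jc.det = 1 * Jc.det := by
        rw [one_mul]; linear_combination h1
      exact mul_right_cancel₀ hJcdet.ne_zero h3
    exact IsUnit.of_mul_eq_one _ h2
  have hMcinv : Mc⁻¹ = Jc * Mcᵀ * (-Jc) := by
    apply Matrix.inv_eq_right_inv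
    rw [← mul_assoc, ← mul_assoc, hsympc, hJcinv]
  have hJcinv' : Jc⁻¹ = -Jc := Matrix.inv_eq_right_inv hJcinv
  have hcp : Mc⁻¹.charpoly = Mc.charpoly := by
    rw [hMcinv, ← hJcinv', my_charpoly_conj Jc (Mcᵀ) hJcdet, my_charpoly_transpose]
  have hroots_inv : Mc.charpoly.roots = Mc.charpoly.roots.map (·⁻¹) := by
    have h := my_roots_charpoly_inv Mc hMcdet
    rwa [hcp] at h
  set r := Mc.charpoly.roots with hr
  have hcard : Multiset.card r = n + n := by
    rw [hr, splits_iff_card_roots.mp (IsAlgClosed.splits _),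
      Matrix.charpoly_natDegree_eq_dim, Fintype.card_sum, Fintype.card_fin]
  have h0 : ∀ z ∈ r, z ≠ 0 := by
    intro s hs h
    have hprod : r.prod = Mc.det := (Matrix.det_eq_prod_roots_charpoly Mc).symm
    exact hMcdet.ne_zero (by rw [← hprod]; exact Multiset.prod_eq_zero (h ▸ hs))
  -- no roots on the unit circle
  have hcirc : ∀ z ∈ r, ‖z‖ ≠ 1 := by
    intro z hz habs
    have hne : Mc.charpoly ≠ 0 := (Mc.charpoly_monic).ne_zero
    have hroot : Mc.charpoly.eval z = 0 := (Polynomial.mem_roots hne).mp hz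
    rw [my_eval_charpoly] at hroot
    obtain ⟨v, hv, hveq⟩ := (Matrix.exists_mulVec_eq_zero_iff).mpr hroot
    have hev : Mc *ᵥ v = z • v := by
      have h := hveq
      rw [Matrix.sub_mulVec, Matrix.smul_mulVec, Matrix.one_mulVec, sub_eq_zero] at h
      exact h.symm
    exact my_no_unit_circle A Q hA hQ B R hR hctrb hobs z habs v hv (by rw [← hMc]; exact hev)
  -- counting
  have hsplit : Multiset.card (r.filter fun z => ‖z‖ < 1)
      + Multiset.card (r.filter fun z => 1 < ‖z‖) = n + n := by
    rw [← hcard]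
    have hfc : (r.filter fun z => ¬ ‖z‖ < 1) = r.filter fun z => 1 < ‖z‖ := by
      apply Multiset.filter_congr
      intro z hz
      constructor
      · intro h
        exact lt_of_le_of_ne (le_of_not_gt h) (Ne.symm (hcirc z hz))
      · intro h h'
        exact absurd (lt_trans h' h) (lt_irrefl _)
    rw [← hfc, ← Multiset.card_add, Multiset.filter_add_not]
  have hswap : Multiset.card (r.filter fun z => 1 < ‖z‖)
      = Multiset.card (r.filter fun z => ‖z‖ < 1) := by
    have hre : (r.filter fun z => 1 < ‖z‖)
        = ((r.map (·⁻¹)).filter fun z => 1 < ‖z‖) := by rw [← hroots_inv]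
    rw [hre, Multiset.filter_map, Multiset.card_map]
    congr 1
    apply Multiset.filter_congr
    intro z hz
    have hz0 : ‖z‖ ≠ 0 := norm_ne_zero_iff.mpr (h0 z hz)
    have hpos : 0 < ‖z‖ := lt_of_le_of_ne (norm_nonneg z) (Ne.symm hz0)
    simp only [Function.comp_apply, norm_inv]
    rw [one_lt_inv_iff₀]
    constructor
    · intro h; exact h.2
    · intro h; exact ⟨hpos, h⟩
  refine ⟨?_, ?_⟩
  · omega
  · omega
end

section
/- Suppose P₁, P₂ are complex n×n matrices and Λ₁ is a complex n×n diagonal matrix such that H_d·[P₁; P₂] = [P₁; P₂]·Λ₁ (matrices regarded over ℂ), and suppose both P₁ and P₂ are invertible. Let P := P₂·P₁⁻¹. Then R + BᵀPB is invertible and the discrete-time closed-loop matrix A_cl := A − B(R + BᵀPB)⁻¹BᵀPA satisfies A_cl = P₁·Λ₁·P₁⁻¹; in particular the eigenvalues of A_cl are exactly the diagonal entries of Λ₁. -/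
open Matrix

set_option maxHeartbeats 1000000 in
/-- If `H_d·[P₁;P₂] = [P₁;P₂]·Λ₁` over `ℂ` with `Λ₁` diagonal and both
`P₁, P₂` invertible, then for `P := P₂·P₁⁻¹` the matrix `R + BᵀPB` is invertible and the
discrete-time closed-loop matrix `A_cl = A − B(R + BᵀPB)⁻¹BᵀPA` equals `P₁·Λ₁·P₁⁻¹`; in
particular its eigenvalues are exactly the diagonal entries of `Λ₁`. -/
theorem discrete_closed_loop_eigenvalues {n m : ℕ}
    (A Q : Matrix (Fin n) (Fin n) ℝ) (hA : IsUnit A)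
    (B : Matrix (Fin n) (Fin m) ℝ)
    (R : Matrix (Fin m) (Fin m) ℝ) (hR : IsUnit R)
    (P₁ P₂ Λ : Matrix (Fin n) (Fin n) ℂ) (hΛ : Λ.IsDiag)
    (hP₁ : IsUnit P₁) (hP₂ : IsUnit P₂)
    (hInv :
      Matrix.fromBlocks
          (A.map Complex.ofReal +
            (B.map Complex.ofReal) * (R.map Complex.ofReal)⁻¹ * (B.map Complex.ofReal)ᵀ *
              ((A.map Complex.ofReal)ᵀ)⁻¹ * (Q.map Complex.ofReal))
          (-((B.map Complex.ofReal) * (R.map Complex.ofReal)⁻¹ * (B.map Complex.ofReal)ᵀ *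
              ((A.map Complex.ofReal)ᵀ)⁻¹))
          (-(((A.map Complex.ofReal)ᵀ)⁻¹ * (Q.map Complex.ofReal)))
          (((A.map Complex.ofReal)ᵀ)⁻¹) * Matrix.fromRows P₁ P₂ =
        Matrix.fromRows P₁ P₂ * Λ)
    (P : Matrix (Fin n) (Fin n) ℂ) (hPdef : P = P₂ * P₁⁻¹) :
    IsUnit (R.map Complex.ofReal + (B.map Complex.ofReal)ᵀ * P * (B.map Complex.ofReal)) ∧
    A.map Complex.ofReal -
        (B.map Complex.ofReal) *
          (R.map Complex.ofReal + (B.map Complex.ofReal)ᵀ * P * (B.map Complex.ofReal))⁻¹ *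
          (B.map Complex.ofReal)ᵀ * P * (A.map Complex.ofReal) = P₁ * Λ * P₁⁻¹ ∧
    ∀ μ : ℂ,
      (∃ v : Fin n → ℂ, v ≠ 0 ∧
        (A.map Complex.ofReal -
          (B.map Complex.ofReal) *
            (R.map Complex.ofReal + (B.map Complex.ofReal)ᵀ * P * (B.map Complex.ofReal))⁻¹ *
            (B.map Complex.ofReal)ᵀ * P * (A.map Complex.ofReal)).mulVec v = μ • v) ↔
        ∃ i : Fin n, Λ i i = μ := by
  set a : Matrix (Fin n) (Fin n) ℂ := A.map Complex.ofReal with ha_def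
  set q : Matrix (Fin n) (Fin n) ℂ := Q.map Complex.ofReal with hq_def
  set b : Matrix (Fin n) (Fin m) ℂ := B.map Complex.ofReal with hb_def
  set r : Matrix (Fin m) (Fin m) ℂ := R.map Complex.ofReal with hr_def
  -- units
  have hmapA : a.det = Complex.ofReal A.det := (RingHom.map_det Complex.ofRealHom A).symm
  have hmapR : r.det = Complex.ofReal R.det := (RingHom.map_det Complex.ofRealHom R).symm
  have hadet : IsUnit a.det := by
    rw [hmapA]; exact isUnit_iff_ne_zero.2 (by
      simpa using (isUnit_iff_ne_zero.1 ((Matrix.isUnit_iff_isUnit_det A).1 hA)))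
  have hrdet : IsUnit r.det := by
    rw [hmapR]; exact isUnit_iff_ne_zero.2 (by
      simpa using (isUnit_iff_ne_zero.1 ((Matrix.isUnit_iff_isUnit_det R).1 hR)))
  have haTdet : IsUnit aᵀ.det := by rwa [Matrix.det_transpose]
  have hP₁det : IsUnit P₁.det := (Matrix.isUnit_iff_isUnit_det P₁).1 hP₁
  have hP₁l : P₁⁻¹ * P₁ = 1 := Matrix.nonsing_inv_mul _ hP₁det
  have hP₁r : P₁ * P₁⁻¹ = 1 := Matrix.mul_nonsing_inv _ hP₁det
  have haTr : aᵀ * (aᵀ)⁻¹ = 1 := Matrix.mul_nonsing_inv _ haTdet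
  have hrr : r * r⁻¹ = 1 := Matrix.mul_nonsing_inv _ hrdet
  -- block equations
  rw [Matrix.fromBlocks_mul_fromRows, Matrix.fromRows_mul, Matrix.fromRows_ext_iff] at hInv
  obtain ⟨eq1, eq2⟩ := hInv
  set X : Matrix (Fin n) (Fin n) ℂ := b * r⁻¹ * bᵀ with hX_def
  -- from eq2 : (aᵀ)⁻¹*q*P₁ - (aᵀ)⁻¹*P₂ = -(P₂*Λ)
  have e2 : (aᵀ)⁻¹ * q * P₁ - (aᵀ)⁻¹ * P₂ = -(P₂ * Λ) := by
    rw [← eq2]; noncomm_ring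
  have key1 : a * P₁ = P₁ * Λ + X * (P₂ * Λ) := by
    calc a * P₁
        = ((a + X * (aᵀ)⁻¹ * q) * P₁ + (-(X * (aᵀ)⁻¹)) * P₂)
            - X * ((aᵀ)⁻¹ * q * P₁ - (aᵀ)⁻¹ * P₂) := by noncomm_ring
      _ = P₁ * Λ - X * (-(P₂ * Λ)) := by rw [eq1, e2]
      _ = P₁ * Λ + X * (P₂ * Λ) := by noncomm_ring
  set L : Matrix (Fin n) (Fin n) ℂ := P₁ * Λ * P₁⁻¹ with hL_def
  have hPL : P * L = P₂ * Λ * P₁⁻¹ := by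
    rw [hPdef, hL_def]
    calc P₂ * P₁⁻¹ * (P₁ * Λ * P₁⁻¹) = P₂ * (P₁⁻¹ * P₁) * (Λ * P₁⁻¹) := by noncomm_ring
      _ = P₂ * Λ * P₁⁻¹ := by rw [hP₁l]; noncomm_ring
  set M : Matrix (Fin n) (Fin n) ℂ := 1 + X * P with hM_def
  have key2 : a = M * L := by
    have : a * P₁ * P₁⁻¹ = (P₁ * Λ + X * (P₂ * Λ)) * P₁⁻¹ := by rw [key1]
    calc a = a * (P₁ * P₁⁻¹) := by rw [hP₁r, mul_one]
      _ = (P₁ * Λ + X * (P₂ * Λ)) * P₁⁻¹ := by rw [← Matrix.mul_assoc, this]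
      _ = L + X * (P₂ * Λ * P₁⁻¹) := by rw [hL_def]; noncomm_ring
      _ = L + X * (P * L) := by rw [hPL]
      _ = M * L := by rw [hM_def]; noncomm_ring
  -- invertibility of M
  have hMdet : IsUnit M.det := by
    have : a.det = M.det * L.det := by rw [key2, Matrix.det_mul]
    exact isUnit_of_mul_isUnit_left (by rw [← this]; exact hadet)
  -- invertibility of S
  set S : Matrix (Fin m) (Fin m) ℂ := r + bᵀ * P * b with hS_def
  have hSfact : S = r * (1 + r⁻¹ * (bᵀ * P) * b) := by
    rw [hS_def, Matrix.mul_add, Matrix.mul_one, ← Matrix.mul_assoc, ← Matrix.mul_assoc, hrr,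
      Matrix.one_mul]
  have hcomm : (1 + r⁻¹ * (bᵀ * P) * b).det = M.det := by
    have h1 : (1 + (r⁻¹ * (bᵀ * P)) * b).det = (1 + b * (r⁻¹ * (bᵀ * P))).det :=
      (Matrix.det_one_add_mul_comm _ _).symm
    have h2 : 1 + b * (r⁻¹ * (bᵀ * P)) = M := by
      rw [hM_def, hX_def]; simp [Matrix.mul_assoc]
    rw [h1, h2]
  have hSdet : IsUnit S.det := by
    rw [hSfact, Matrix.det_mul, hcomm]
    exact hrdet.mul hMdet
  have hSunit : IsUnit S := (Matrix.isUnit_iff_isUnit_det S).2 hSdet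
  have hSl : S⁻¹ * S = 1 := Matrix.nonsing_inv_mul _ hSdet
  -- Woodbury-type identity
  have hexp : S * (r⁻¹ * (bᵀ * P)) = bᵀ * P + bᵀ * P * b * (r⁻¹ * (bᵀ * P)) := by
    rw [hS_def]
    rw [Matrix.add_mul, ← Matrix.mul_assoc r, hrr, Matrix.one_mul]
  have hWM : (1 - b * S⁻¹ * (bᵀ * P)) * M = 1 := by
    calc (1 - b * S⁻¹ * (bᵀ * P)) * M
        = 1 + b * (r⁻¹ * (bᵀ * P))
            - b * (S⁻¹ * (bᵀ * P + bᵀ * P * b * (r⁻¹ * (bᵀ * P)))) := by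
          rw [hM_def, hX_def]
          simp only [Matrix.sub_mul, Matrix.mul_add, Matrix.add_mul, Matrix.mul_one,
            Matrix.one_mul, Matrix.mul_assoc]
          abel
      _ = 1 + b * (r⁻¹ * (bᵀ * P)) - b * ((S⁻¹ * S) * (r⁻¹ * (bᵀ * P))) := by
          rw [← hexp, ← Matrix.mul_assoc S⁻¹ S]
      _ = 1 := by rw [hSl, Matrix.one_mul]; abel
  -- closed loop equals L
  have hAcl : a - b * S⁻¹ * bᵀ * P * a = P₁ * Λ * P₁⁻¹ := by
    calc a - b * S⁻¹ * bᵀ * P * a = (1 - b * S⁻¹ * (bᵀ * P)) * a := by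
          simp only [Matrix.sub_mul, Matrix.one_mul, Matrix.mul_assoc]
      _ = (1 - b * S⁻¹ * (bᵀ * P)) * (M * L) := by rw [← key2]
      _ = ((1 - b * S⁻¹ * (bᵀ * P)) * M) * L := (Matrix.mul_assoc _ _ _).symm
      _ = L := by rw [hWM, one_mul]
  refine ⟨hSunit, hAcl, fun μ => ?_⟩
  rw [hAcl]
  constructor
  · rintro ⟨v, hv0, hv⟩
    set w : Fin n → ℂ := P₁⁻¹ *ᵥ v with hw_def
    have hvw : P₁ *ᵥ w = v := by rw [hw_def, mulVec_mulVec, hP₁r, one_mulVec]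
    have hw : Λ *ᵥ w = μ • w := by
      have : P₁⁻¹ *ᵥ ((P₁ * Λ * P₁⁻¹) *ᵥ v) = P₁⁻¹ *ᵥ (μ • v) := by rw [hv]
      rw [mulVec_mulVec, mulVec_smul] at this
      calc Λ *ᵥ w = (Λ * P₁⁻¹) *ᵥ v := by rw [hw_def, mulVec_mulVec]
        _ = (P₁⁻¹ * (P₁ * Λ * P₁⁻¹)) *ᵥ v := by
            rw [show P₁⁻¹ * (P₁ * Λ * P₁⁻¹) = (P₁⁻¹ * P₁) * (Λ * P₁⁻¹) by noncomm_ring,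
              hP₁l, one_mul]
        _ = μ • w := this
    have hw0 : w ≠ 0 := by
      intro h
      exact hv0 (by rw [← hvw, h, mulVec_zero])
    obtain ⟨i, hi⟩ := Function.ne_iff.1 hw0
    refine ⟨i, ?_⟩
    have hsum : (Λ *ᵥ w) i = Λ i i * w i := by
      have hrfl : (Λ *ᵥ w) i = ∑ j, Λ i j * w j := rfl
      rw [hrfl]
      exact Finset.sum_eq_single i (fun j _ hj => by rw [hΛ hj.symm, zero_mul])
        (fun h => absurd (Finset.mem_univ i) h)
    have : Λ i i * w i = μ * w i := by
      rw [← hsum, hw, Pi.smul_apply, smul_eq_mul]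
    exact mul_right_cancel₀ (by simpa using hi) this
  · rintro ⟨i, hi⟩
    refine ⟨P₁ *ᵥ (Pi.single i 1 : Fin n → ℂ), ?_, ?_⟩
    · intro h
      have h2 : P₁⁻¹ *ᵥ (P₁ *ᵥ (Pi.single i 1 : Fin n → ℂ)) = P₁⁻¹ *ᵥ (0 : Fin n → ℂ) := by
        rw [h]
      rw [mulVec_mulVec, hP₁l, one_mulVec, mulVec_zero] at h2
      have h1 := congrFun h2 i
      simp at h1
    · have hΛw : Λ *ᵥ (Pi.single i 1 : Fin n → ℂ) = μ • (Pi.single i 1 : Fin n → ℂ) := by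
        funext j
        by_cases hji : j = i
        · subst hji; simp [hi]
        · simp [hΛ hji, Pi.single_eq_of_ne hji]
      calc (P₁ * Λ * P₁⁻¹) *ᵥ (P₁ *ᵥ (Pi.single i 1 : Fin n → ℂ))
          = (P₁ * Λ * (P₁⁻¹ * P₁)) *ᵥ (Pi.single i 1 : Fin n → ℂ) := by
            rw [mulVec_mulVec, Matrix.mul_assoc (P₁ * Λ)]
        _ = (P₁ * Λ) *ᵥ (Pi.single i 1 : Fin n → ℂ) := by rw [hP₁l, mul_one]
        _ = P₁ *ᵥ (Λ *ᵥ (Pi.single i 1 : Fin n → ℂ)) := by rw [← mulVec_mulVec]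
        _ = μ • (P₁ *ᵥ (Pi.single i 1 : Fin n → ℂ)) := by rw [hΛw, mulVec_smul]
end

section
/- Suppose V is differentiable on E, V(x_eq) = 0, V(x) > 0 for every x ≠ x_eq, and V satisfies the undiscounted Hamilton–Jacobi–Bellman identity along the policy π: for every x ∈ E, ⟨∇V(x), f(x, π(x))⟩ = −l(x, π(x)), where l(x, π(x)) ≥ 0 for all x. Then the equilibrium x_eq is Lyapunov stable for the closed-loop system: for every ε > 0 there exists δ > 0 such that every differentiable curve x : [0,∞) → E satisfying x′(t) = f(x(t), π(x(t))) for all t ≥ 0 and ‖x(0) − x_eq‖ < δ satisfies ‖x(t) − x_eq‖ < ε for all t ≥ 0. -/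
open scoped RealInnerProductSpace

/-- If `V` is differentiable, positive definite about `x_eq`
(`V(x_eq) = 0`, `V(x) > 0` for `x ≠ x_eq`), and satisfies the undiscounted HJB identity
`⟨∇V(x), f(x, π(x))⟩ = −l(x, π(x))` with `l(x, π(x)) ≥ 0`, then `x_eq` is Lyapunov stable
for the closed-loop system. -/
theorem hjb_solution_lyapunov_stable {n : ℕ} {U : Type*}
    (f : EuclideanSpace ℝ (Fin n) × U → EuclideanSpace ℝ (Fin n))
    (π : EuclideanSpace ℝ (Fin n) → U)
    (l : EuclideanSpace ℝ (Fin n) × U → ℝ)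
    (V : EuclideanSpace ℝ (Fin n) → ℝ)
    (xeq : EuclideanSpace ℝ (Fin n))
    (hV : Differentiable ℝ V)
    (hV0 : V xeq = 0)
    (hVpos : ∀ x : EuclideanSpace ℝ (Fin n), x ≠ xeq → 0 < V x)
    (hHJB : ∀ x : EuclideanSpace ℝ (Fin n), ⟪gradient V x, f (x, π x)⟫ = - l (x, π x))
    (hl : ∀ x : EuclideanSpace ℝ (Fin n), 0 ≤ l (x, π x)) :
    ∀ ε : ℝ, 0 < ε → ∃ δ : ℝ, 0 < δ ∧
      ∀ x : ℝ → EuclideanSpace ℝ (Fin n), Differentiable ℝ x →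
        (∀ t : ℝ, 0 ≤ t → deriv x t = f (x t, π (x t))) →
        ‖x 0 - xeq‖ < δ → ∀ t : ℝ, 0 ≤ t → ‖x t - xeq‖ < ε := by
  intro ε hε
  rcases subsingleton_or_nontrivial (EuclideanSpace ℝ (Fin n)) with hs | hnt
  · refine ⟨1, one_pos, fun x _ _ _ t _ => ?_⟩
    rw [Subsingleton.elim (x t) xeq]
    simpa using hε
  · -- the sphere of radius ε around xeq is nonempty and compact
    have hS : (Metric.sphere xeq ε).Nonempty := NormedSpace.sphere_nonempty.2 hε.le
    obtain ⟨y0, hy0S, hy0min⟩ :=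
      (isCompact_sphere xeq ε).exists_isMinOn hS hV.continuous.continuousOn
    have hy0ne : y0 ≠ xeq := by
      intro h
      rw [Metric.mem_sphere, h, dist_self] at hy0S
      exact hε.ne hy0S
    have hmpos : 0 < V y0 := hVpos y0 hy0ne
    -- choose δ' by continuity of V at xeq
    have hopen : IsOpen (V ⁻¹' Set.Iio (V y0)) :=
      (isOpen_Iio).preimage hV.continuous
    obtain ⟨δ', hδ'pos, hδ'ball⟩ :=
      Metric.isOpen_iff.1 hopen xeq (by simp [hV0, hmpos])
    refine ⟨min δ' ε, lt_min hδ'pos hε, fun x hx hode hx0 t ht => ?_⟩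
    -- V ∘ x is antitone on [0, ∞)
    have hderiv : ∀ s : ℝ, HasDerivAt (fun u => V (x u))
        ((fderiv ℝ V (x s)) (deriv x s)) s :=
      fun s => (hV (x s)).hasFDerivAt.comp_hasDerivAt s (hx s).hasDerivAt
    have hderiv_eq : ∀ s : ℝ, 0 ≤ s →
        (fderiv ℝ V (x s)) (deriv x s) = - l (x s, π (x s)) := by
      intro s hs
      have hg := (hV (x s)).hasGradientAt.hasFDerivAt
      have : (fderiv ℝ V (x s)) (deriv x s)
          = ⟪gradient V (x s), deriv x s⟫ := by
        rw [hg.fderiv]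
        simp [InnerProductSpace.toDual_apply_apply]
      rw [this, hode s hs, hHJB (x s)]
    have hmono : AntitoneOn (fun u => V (x u)) (Set.Ici 0) := by
      refine antitoneOn_of_deriv_nonpos (convex_Ici 0)
        (hV.continuous.comp hx.continuous).continuousOn
        (fun s _ => ((hderiv s).differentiableAt.differentiableWithinAt)) ?_
      intro s hs
      rw [interior_Ici] at hs
      rw [(hderiv s).deriv, hderiv_eq s (le_of_lt hs)]
      simpa using hl (x s)
    -- V (x 0) < V y0
    have hVx0 : V (x 0) < V y0 :=
      hδ'ball (by
        rw [Metric.mem_ball, dist_eq_norm]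
        exact lt_of_lt_of_le hx0 (min_le_left _ _))
    -- conclude by intermediate value theorem
    by_contra hcon
    push_neg at hcon
    have hx0ε : ‖x 0 - xeq‖ < ε := lt_of_lt_of_le hx0 (min_le_right _ _)
    have hcont : ContinuousOn (fun s => ‖x s - xeq‖) (Set.Icc 0 t) :=
      (Continuous.norm (hx.continuous.sub continuous_const)).continuousOn
    have hIVT := intermediate_value_Icc ht hcont
    have hmem : ε ∈ Set.Icc ‖x 0 - xeq‖ ‖x t - xeq‖ := ⟨hx0ε.le, hcon⟩
    obtain ⟨s, hsI, hsε⟩ := hIVT hmem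
    have hxsS : x s ∈ Metric.sphere xeq ε := by
      rw [Metric.mem_sphere, dist_eq_norm]
      exact hsε
    have h1 : V y0 ≤ V (x s) := hy0min hxsS
    have h2 : V (x s) ≤ V (x 0) :=
      hmono (Set.self_mem_Ici) hsI.1 hsI.1
    linarith
end
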